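/- arXiv:1401.7696 — 6 statements merged into one kernel-verified Lean document; each statement's English description precedes it below -/
import Mathlib

section
/- For relatively prime positive integers m and n, the ℤ-linear extension of X^i ⊗ Y^j ↦ t^{ni+mj} gives a ring isomorphism ℤ[X]/Φ_m(X) ⊗ ℤ[Y]/Φ_n(Y) ≅ ℤ[t]/Φ_{mn}(t), where Φ_k denotes the k-th cyclotomic polynomial. -/
open Polynomial TensorProduct

lemma key_dvd (m n : ℕ) (hm : 0 < m) (hn : 0 < n) :
    cyclotomic (m * n) ℤ ∣ expand ℤ n (cyclotomic m ℤ) := by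
  have hmn : 0 < m * n := Nat.mul_pos hm hn
  obtain ⟨ζ, h⟩ : ∃ ζ : ℂ, IsPrimitiveRoot ζ (m * n) :=
    ⟨_, Complex.isPrimitiveRoot_exp (m * n) hmn.ne'⟩
  have hpow : IsPrimitiveRoot (ζ ^ n) m := h.pow hmn (Nat.mul_comm m n)
  have hroot : aeval ζ (expand ℚ n (cyclotomic m ℚ)) = 0 := by
    rw [aeval_def, ← eval_map, map_expand, map_cyclotomic, expand_eval]
    exact hpow.isRoot_cyclotomic hm
  have hdvdQ : cyclotomic (m * n) ℚ ∣ expand ℚ n (cyclotomic m ℚ) := by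
    rw [cyclotomic_eq_minpoly_rat h hmn]
    exact minpoly.dvd ℚ ζ hroot
  rwa [← map_cyclotomic_int (m * n) ℚ, ← map_cyclotomic_int m ℚ, ← map_expand,
    map_dvd_map (Int.castRingHom ℚ) Int.cast_injective (cyclotomic.monic _ _)] at hdvdQ

lemma exists_nat_inv {n m : ℕ} (h : Nat.Coprime n m) : ∃ a, n * a ≡ 1 [MOD m] := by
  rcases Nat.lt_or_ge 1 m with hm | hm
  · obtain ⟨a, -, ha⟩ := Nat.exists_mul_mod_eq_one_of_coprime h hm
    exact ⟨a, by rwa [Nat.ModEq, Nat.one_mod_eq_one.mpr hm.ne']⟩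
  · interval_cases m
    · exact ⟨1, by simp [Nat.ModEq, (Nat.coprime_zero_right n).mp h]⟩
    · exact ⟨0, by simp [Nat.modEq_one]⟩

lemma pow_eq_of_modEq {M : Type*} [Monoid M] {x : M} {N a b : ℕ} (hx : x ^ N = 1)
    (hab : a ≡ b [MOD N]) : x ^ a = x ^ b := by
  have key : ∀ c : ℕ, x ^ c = x ^ (c % N) := by
    intro c
    conv_lhs => rw [← Nat.div_add_mod c N]
    rw [pow_add, pow_mul, hx, one_pow, one_mul]
  rw [key a, key b, hab]

set_option maxHeartbeats 1000000 in
theorem tensor_cyclotomic_iso (m n : ℕ) (hm : 0 < m) (hn : 0 < n)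
    (hmn : Nat.Coprime m n) :
    ∃ e : TensorProduct ℤ (ℤ[X] ⧸ Ideal.span {cyclotomic m ℤ})
        (ℤ[X] ⧸ Ideal.span {cyclotomic n ℤ}) ≃+*
        (ℤ[X] ⧸ Ideal.span {cyclotomic (m * n) ℤ}),
      ∀ i j : ℕ,
        e ((Ideal.Quotient.mk (Ideal.span {cyclotomic m ℤ}) (X ^ i)) ⊗ₜ[ℤ]
            (Ideal.Quotient.mk (Ideal.span {cyclotomic n ℤ}) (X ^ j))) =
          Ideal.Quotient.mk (Ideal.span {cyclotomic (m * n) ℤ}) (X ^ (n * i + m * j)) := by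
  have hmnpos : 0 < m * n := Nat.mul_pos hm hn
  -- work with AdjoinRoot (defeq to the quotients)
  set B := AdjoinRoot (cyclotomic (m * n) ℤ) with hB
  let r : B := AdjoinRoot.root _
  have h1 : aeval (r ^ n) (cyclotomic m ℤ) = 0 := by
    rw [← expand_aeval n (cyclotomic m ℤ) r, AdjoinRoot.aeval_eq, AdjoinRoot.mk_eq_zero]
    exact key_dvd m n hm hn
  have h2 : aeval (r ^ m) (cyclotomic n ℤ) = 0 := by
    rw [← expand_aeval m (cyclotomic n ℤ) r, AdjoinRoot.aeval_eq, AdjoinRoot.mk_eq_zero,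
      Nat.mul_comm m n]
    exact key_dvd n m hn hm
  let φ₁ : AdjoinRoot (cyclotomic m ℤ) →ₐ[ℤ] B := AdjoinRoot.liftAlgHom _ (Algebra.ofId ℤ B) (r ^ n) (by rw [Algebra.toRingHom_ofId, ← aeval_def]; exact h1)
  let φ₂ : AdjoinRoot (cyclotomic n ℤ) →ₐ[ℤ] B := AdjoinRoot.liftAlgHom _ (Algebra.ofId ℤ B) (r ^ m) (by rw [Algebra.toRingHom_ofId, ← aeval_def]; exact h2)
  let g := Algebra.TensorProduct.productMap φ₁ φ₂
  -- value on generators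
  have hg : ∀ i j : ℕ, g (AdjoinRoot.mk _ (X ^ i) ⊗ₜ[ℤ] AdjoinRoot.mk _ (X ^ j)) =
      AdjoinRoot.mk _ (X ^ (n * i + m * j)) := by
    intro i j
    rw [Algebra.TensorProduct.productMap_apply_tmul]
    simp only [map_pow, AdjoinRoot.mk_X, φ₁, φ₂, AdjoinRoot.liftAlgHom_root]
    rw [← pow_mul, ← pow_mul, ← pow_add]
  -- order of root
  have hr1 : r ^ (m * n) = 1 := by
    have : AdjoinRoot.mk (cyclotomic (m * n) ℤ) (X ^ (m * n) - 1) = 0 :=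
      AdjoinRoot.mk_eq_zero.2 (cyclotomic.dvd_X_pow_sub_one (m * n) ℤ)
    have := sub_eq_zero.mp (by simpa [map_sub, map_pow, AdjoinRoot.mk_X] using this)
    simpa [map_pow, AdjoinRoot.mk_X] using this
  -- surjectivity
  obtain ⟨a, ha⟩ := exists_nat_inv (hmn.symm : Nat.Coprime n m)
  obtain ⟨b, hb⟩ := exists_nat_inv (hmn : Nat.Coprime m n)
  have hmod : n * a + m * b ≡ 1 [MOD m * n] := by
    rw [← Nat.modEq_and_modEq_iff_modEq_mul hmn]
    constructor
    · calc n * a + m * b ≡ n * a + 0 [MOD m] := by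
            exact Nat.ModEq.add_right_cancel' 0 (by simpa using (Nat.modEq_zero_iff_dvd.2 ⟨b, rfl⟩).add_left (n*a))
          _ ≡ 1 [MOD m] := by simpa using ha
    · calc n * a + m * b ≡ 0 + m * b [MOD n] := by
            exact Nat.ModEq.add_right _ (Nat.modEq_zero_iff_dvd.2 ⟨a, rfl⟩)
          _ ≡ 1 [MOD n] := by simpa using hb
  have hrin : r ∈ g.range := by
    have : g (AdjoinRoot.mk _ (X ^ a) ⊗ₜ[ℤ] AdjoinRoot.mk _ (X ^ b)) = r := by
      rw [hg a b, map_pow, AdjoinRoot.mk_X, ← pow_one r]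
      exact pow_eq_of_modEq hr1 hmod
    exact ⟨_, this⟩
  have hsurj : Function.Surjective g := by
    rw [← AlgHom.range_eq_top, eq_top_iff, ← AdjoinRoot.adjoinRoot_eq_top,
      Algebra.adjoin_le_iff, Set.singleton_subset_iff]
    exact hrin
  -- injectivity via free module ranks
  let pbm := AdjoinRoot.powerBasis' (cyclotomic.monic m ℤ)
  let pbn := AdjoinRoot.powerBasis' (cyclotomic.monic n ℤ)
  let pbB := AdjoinRoot.powerBasis' (cyclotomic.monic (m * n) ℤ)
  let bT := Module.Basis.tensorProduct pbm.basis pbn.basis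
  have hcard : Fintype.card (Fin pbB.dim) = Fintype.card (Fin pbm.dim × Fin pbn.dim) := by
    simp [pbB, pbm, pbn, AdjoinRoot.powerBasis'_dim, natDegree_cyclotomic,
      Nat.totient_mul hmn]
  let e0 : B ≃ₗ[ℤ] _ := pbB.basis.equiv bT (Fintype.equivOfCardEq hcard)
  have : Module.Finite ℤ B := Module.Finite.of_basis pbB.basis
  let f : B →ₗ[ℤ] B := g.toLinearMap ∘ₗ e0.toLinearMap
  have hfsurj : Function.Surjective f := hsurj.comp e0.surjective
  have hfinj : Function.Injective f :=
    OrzechProperty.injective_of_surjective_endomorphism f hfsurj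
  have hginj : Function.Injective g := by
    intro x y hxy
    have hx : g x = f (e0.symm x) := by simp [f]
    have hy : g y = f (e0.symm y) := by simp [f]
    have := hfinj (hx ▸ hy ▸ hxy)
    exact e0.symm.injective this
  have hbij : Function.Bijective g.toRingHom := ⟨hginj, hsurj⟩
  refine ⟨RingEquiv.ofBijective g.toRingHom hbij, fun i j => ?_⟩
  exact hg i j
end

section
/- For relatively prime positive integers m and n, the ℤ-linear extension of X^i ⊗ Y^j ↦ t^{mj+ni} is a ring isomorphism ℤ[X]/Φ_m(X) ⊗ ℤ[Y]/(Y^n−1) ≅ ℤ[t]/(Φ_m(t^n)). -/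
open Polynomial TensorProduct

private lemma pow_eq_pow_of_modEq' {M : Type*} [Monoid M] {x : M} {m : ℕ} (h : x ^ m = 1)
    {k l : ℕ} (hkl : k ≡ l [MOD m]) : x ^ k = x ^ l := by
  have key : ∀ r : ℕ, x ^ r = x ^ (r % m) := by
    intro r
    conv_lhs => rw [← Nat.mod_add_div r m, pow_add, pow_mul, h, one_pow, mul_one]
  rw [key k, key l, hkl]

private lemma exists_pos_inv' {m n : ℕ} (hm : 0 < m) (h : Nat.Coprime n m) :
    ∃ a : ℕ, 0 < a ∧ n * a ≡ 1 [MOD m] := by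
  haveI : NeZero m := ⟨hm.ne'⟩
  refine ⟨((n : ZMod m)⁻¹).val + m, by omega, ?_⟩
  have h1 : n * (((n : ZMod m)⁻¹).val + m) ≡ n * ((n : ZMod m)⁻¹).val [MOD m] := by
    unfold Nat.ModEq
    rw [Nat.mul_add, Nat.add_mul_mod_self_right]
  refine h1.trans ?_
  have h2 := ZMod.coe_mul_inv_eq_one n h
  rw [← ZMod.natCast_eq_natCast_iff]
  push_cast
  rw [ZMod.natCast_val, ZMod.cast_id, h2]

theorem tensor_cyclotomic_group_algebra_iso (m n : ℕ) (hm : 0 < m) (hn : 0 < n)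
    (hmn : Nat.Coprime m n) :
    ∃ e : TensorProduct ℤ (ℤ[X] ⧸ Ideal.span {cyclotomic m ℤ})
        (ℤ[X] ⧸ Ideal.span {(X : ℤ[X]) ^ n - 1}) ≃+*
        (ℤ[X] ⧸ Ideal.span {(cyclotomic m ℤ).comp (X ^ n)}),
      ∀ i j : ℕ,
        e ((Ideal.Quotient.mk (Ideal.span {cyclotomic m ℤ}) (X ^ i)) ⊗ₜ[ℤ]
            (Ideal.Quotient.mk (Ideal.span {(X : ℤ[X]) ^ n - 1}) (X ^ j))) =
          Ideal.Quotient.mk (Ideal.span {(cyclotomic m ℤ).comp (X ^ n)})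
            (X ^ (m * j + n * i)) := by
  obtain ⟨a, ha0, ha⟩ := exists_pos_inv' hm hmn.symm   -- n * a ≡ 1 [MOD m]
  obtain ⟨b, hb0, hb⟩ := exists_pos_inv' hn hmn        -- m * b ≡ 1 [MOD n]
  set Pm : ℤ[X] := cyclotomic m ℤ with hPmdef
  set Q : ℤ[X] := (X : ℤ[X]) ^ n - 1 with hQdef
  set Pc : ℤ[X] := Pm.comp (X ^ n) with hPcdef
  let A := AdjoinRoot Pm
  let B := AdjoinRoot Q
  let C := AdjoinRoot Pc
  let u : A := AdjoinRoot.root Pm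
  let v : B := AdjoinRoot.root Q
  let t : C := AdjoinRoot.root Pc
  have hdvd_m : Pm ∣ (X : ℤ[X]) ^ m - 1 := cyclotomic.dvd_X_pow_sub_one m ℤ
  have hum : u ^ m = 1 := by
    have h0 : AdjoinRoot.mk Pm ((X : ℤ[X]) ^ m - 1) = 0 := AdjoinRoot.mk_eq_zero.mpr hdvd_m
    rw [map_sub, map_pow, map_one, sub_eq_zero] at h0
    exact h0
  have hvn : v ^ n = 1 := by
    have h0 : AdjoinRoot.mk Q Q = 0 := AdjoinRoot.mk_self
    rw [hQdef, map_sub, map_pow, map_one, sub_eq_zero] at h0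
    exact h0
  have hdvd_c : Pc ∣ (X : ℤ[X]) ^ (m * n) - 1 := by
    obtain ⟨c, hc⟩ := hdvd_m
    refine ⟨c.comp (X ^ n), ?_⟩
    have : ((X : ℤ[X]) ^ m - 1).comp (X ^ n) = (X : ℤ[X]) ^ (m * n) - 1 := by
      rw [sub_comp, pow_comp, X_comp, one_comp, ← pow_mul, mul_comm n m]
    rw [← this, hc, mul_comp]
  have htmn : t ^ (m * n) = 1 := by
    have h0 : AdjoinRoot.mk Pc ((X : ℤ[X]) ^ (m * n) - 1) = 0 := AdjoinRoot.mk_eq_zero.mpr hdvd_c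
    rw [map_sub, map_pow, map_one, sub_eq_zero] at h0
    exact h0
  have hfA0 : aeval (t ^ n) Pm = 0 := by
    have h1 : aeval t (Pm.comp (X ^ n)) = 0 := by
      rw [AdjoinRoot.aeval_eq]; exact AdjoinRoot.mk_self
    rwa [aeval_comp, map_pow, aeval_X] at h1
  have hfB0 : aeval (t ^ m) Q = 0 := by
    rw [hQdef, map_sub, map_pow, aeval_X, map_one, ← pow_mul, htmn, sub_self]
  let fA : A →ₐ[ℤ] C := AdjoinRoot.liftAlgHom Pm (Algebra.ofId ℤ C) (t ^ n) hfA0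
  let fB : B →ₐ[ℤ] C := AdjoinRoot.liftAlgHom Q (Algebra.ofId ℤ C) (t ^ m) hfB0
  let f : A ⊗[ℤ] B →ₐ[ℤ] C := Algebra.TensorProduct.productMap fA fB
  let z : A ⊗[ℤ] B := (u ^ a) ⊗ₜ[ℤ] (v ^ b)
  have hz_pow : ∀ k : ℕ, z ^ k = (u ^ (a * k)) ⊗ₜ[ℤ] (v ^ (b * k)) := by
    intro k
    rw [show z ^ k = (u ^ a) ⊗ₜ[ℤ] (v ^ b) ^ k from rfl, Algebra.TensorProduct.tmul_pow,
      ← pow_mul, ← pow_mul]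
  have hzn : z ^ n = u ⊗ₜ[ℤ] 1 := by
    rw [hz_pow]
    congr 1
    · have : a * n ≡ 1 [MOD m] := (Nat.mul_comm n a ▸ ha : a * n ≡ 1 [MOD m])
      rw [pow_eq_pow_of_modEq' hum this, pow_one]
    · rw [mul_comm, pow_mul, hvn, one_pow]
  have hz0 : aeval z Pc = 0 := by
    rw [hPcdef, aeval_comp, map_pow, aeval_X, hzn]
    have h1 : (u ⊗ₜ[ℤ] (1 : B)) = Algebra.TensorProduct.includeLeft (R := ℤ) (S := ℤ) u := rfl
    rw [h1, Polynomial.aeval_algHom_apply, AdjoinRoot.aeval_eq, AdjoinRoot.mk_self, map_zero]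
  let g : C →ₐ[ℤ] A ⊗[ℤ] B := AdjoinRoot.liftAlgHom Pc (Algebra.ofId ℤ (A ⊗[ℤ] B)) z hz0
  have hfAu : fA u = t ^ n := AdjoinRoot.liftAlgHom_root _ _ _ _
  have hfBv : fB v = t ^ m := AdjoinRoot.liftAlgHom_root _ _ _ _
  have hgt : g t = z := AdjoinRoot.liftAlgHom_root _ _ _ _
  have hgt' : g (AdjoinRoot.root Pc) = z := AdjoinRoot.liftAlgHom_root _ _ _ _
  have hfz : f z = t := by
    rw [show f z = fA (u ^ a) * fB (v ^ b) from rfl, map_pow, map_pow,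
      hfAu, hfBv, ← pow_mul, ← pow_mul, ← pow_add]
    have h1 : n * a + m * b ≡ 1 [MOD m] := by
      have h2 : n * a + m * b ≡ 1 + 0 [MOD m] :=
        ha.add ((Nat.modEq_zero_iff_dvd).mpr ⟨b, rfl⟩)
      simpa using h2
    have h2 : n * a + m * b ≡ 1 [MOD n] := by
      have h3 : n * a + m * b ≡ 0 + 1 [MOD n] :=
        ((Nat.modEq_zero_iff_dvd).mpr ⟨a, rfl⟩).add hb
      simpa using h3
    have h4 : n * a + m * b ≡ 1 [MOD m * n] :=
      (Nat.modEq_and_modEq_iff_modEq_mul hmn).mp ⟨h1, h2⟩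
    rw [pow_eq_pow_of_modEq' htmn h4, pow_one]
  have hfg : f.comp g = AlgHom.id ℤ C := by
    apply AdjoinRoot.algHom_ext
    rw [AlgHom.comp_apply, hgt', AlgHom.id_apply]
    exact hfz
  have hgf : g.comp f = AlgHom.id ℤ (A ⊗[ℤ] B) := by
    apply Algebra.TensorProduct.ext
    · apply AdjoinRoot.algHom_ext
      have hfl : f (u ⊗ₜ[ℤ] 1) = t ^ n := by
        rw [show f (u ⊗ₜ[ℤ] 1) = fA u * fB 1 from rfl, map_one, mul_one,
          hfAu]
      simp only [AlgHom.restrictScalars_apply, AlgHom.comp_apply,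
        Algebra.TensorProduct.includeLeft_apply, AlgHom.id_apply]
      rw [show (AdjoinRoot.root Pm : A) = u from rfl, hfl, map_pow, hgt, hzn]
    · apply AdjoinRoot.algHom_ext
      have hfr : f ((1 : A) ⊗ₜ[ℤ] v) = t ^ m := by
        rw [show f ((1 : A) ⊗ₜ[ℤ] v) = fA 1 * fB v from rfl, map_one, one_mul,
          hfBv]
      simp only [AlgHom.restrictScalars_apply, AlgHom.comp_apply,
        Algebra.TensorProduct.includeRight_apply, AlgHom.id_apply]
      rw [show (AdjoinRoot.root Q : B) = v from rfl, hfr, map_pow, hgt,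
        hz_pow]
      congr 1
      · rw [mul_comm, pow_mul, hum, one_pow]
      · have : b * m ≡ 1 [MOD n] := (Nat.mul_comm m b ▸ hb : b * m ≡ 1 [MOD n])
        rw [pow_eq_pow_of_modEq' hvn this, pow_one]
  let e : A ⊗[ℤ] B ≃ₐ[ℤ] C := AlgEquiv.ofAlgHom f g hfg hgf
  refine ⟨e.toRingEquiv, ?_⟩
  intro i j
  have hL : Ideal.Quotient.mk (Ideal.span {Pm}) (X ^ i) = u ^ i := by
    rw [show Ideal.Quotient.mk (Ideal.span {Pm}) (X ^ i) = AdjoinRoot.mk Pm (X ^ i) from rfl,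
      map_pow]
    rfl
  have hR : Ideal.Quotient.mk (Ideal.span {Q}) (X ^ j) = v ^ j := by
    rw [show Ideal.Quotient.mk (Ideal.span {Q}) (X ^ j) = AdjoinRoot.mk Q (X ^ j) from rfl,
      map_pow]
    rfl
  have hC : Ideal.Quotient.mk (Ideal.span {Pc}) (X ^ (m * j + n * i)) = t ^ (m * j + n * i) := by
    rw [show Ideal.Quotient.mk (Ideal.span {Pc}) (X ^ (m * j + n * i)) =
      AdjoinRoot.mk Pc (X ^ (m * j + n * i)) from rfl, map_pow]
    rfl
  rw [hL, hR, hC]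
  show f ((u ^ i) ⊗ₜ[ℤ] (v ^ j)) = t ^ (m * j + n * i)
  rw [show f ((u ^ i) ⊗ₜ[ℤ] (v ^ j)) = fA (u ^ i) * fB (v ^ j) from rfl, map_pow, map_pow,
    hfAu, hfBv, ← pow_mul, ← pow_mul, ← pow_add]
  ring_nf
end

section
/- Let A_n be the matrix (with respect to the standard monomial bases) of the canonical map ℤ[X]/(X^n−1) → ⊕_{d|n} ℤ[X]/Φ_d(X). For coprime positive integers m and n, the Smith normal forms satisfy S(A_m ⊗ A_n) = S(A_{mn}), where ⊗ denotes the Kronecker product. -/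
open Polynomial Kronecker

/-- Row labels of `Amat n`: pairs `(d, i)` with `d` a divisor of `n` (in increasing
order) and `0 ≤ i < φ(d)`. -/
def rowPairs (n : ℕ) : List (ℕ × ℕ) :=
  (n.divisors.sort (· ≤ ·)).flatMap fun d => (List.range d.totient).map fun i => (d, i)

/-- The matrix of the canonical map `Ψₙ : ℤ[X]/(Xⁿ−1) → ⊕_{d∣n} ℤ[X]/Φ_d(X)` with
respect to the standard monomial bases: the row indexed by `(d, i)` records, in column
`j`, the coefficient of `X^i` in `X^j mod Φ_d`. -/
noncomputable def Amat (n : ℕ) : Matrix (Fin n) (Fin n) ℤ :=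
  Matrix.of fun r c =>
    let p := (rowPairs n).getD (r : ℕ) (1, 0)
    (((X : ℤ[X]) ^ (c : ℕ)) %ₘ cyclotomic p.1 ℤ).coeff p.2

open Module

namespace SmithKron

open AdjoinRoot

/-- `AdjoinRoot.lift` as an algebra hom, stated with `aeval`. -/
noncomputable def liftHom (f : ℤ[X]) {T : Type} [CommRing T] [Algebra ℤ T] (x : T) (h : aeval x f = 0) :
    AdjoinRoot f →ₐ[ℤ] T :=
  liftAlgHom f (Algebra.ofId ℤ T) x (by rw [aeval_def] at h; exact h)

@[simp]
lemma liftHom_root (f : ℤ[X]) {T : Type} [CommRing T] [Algebra ℤ T] (x : T)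
    (h : aeval x f = 0) : liftHom f x h (root f) = x :=
  liftAlgHom_root _ _ _ _

open scoped TensorProduct

noncomputable section

/-- `ℤ[X]/(X^k - 1)`. -/
abbrev Rk (k : ℕ) : Type := AdjoinRoot ((X : ℤ[X]) ^ k - 1)

/-- `ℤ[X]/Φ_d`. -/
abbrev Cyc (d : ℕ) : Type := AdjoinRoot (cyclotomic d ℤ)

/-- `⊕_{d ∣ k} ℤ[X]/Φ_d`. -/
abbrev Bk (k : ℕ) : Type := ∀ d : k.divisors, Cyc (d : ℕ)

lemma monicXk {k : ℕ} (hk : k ≠ 0) : ((X : ℤ[X]) ^ k - 1).Monic := by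
  simpa using monic_X_pow_sub_C (1 : ℤ) hk

lemma natDegXk (k : ℕ) : ((X : ℤ[X]) ^ k - 1).natDegree = k := by
  simpa using natDegree_X_pow_sub_C (n := k) (r := (1 : ℤ))

/-- power basis of `Rk k`. -/
def pbR (k : ℕ) (hk : k ≠ 0) : PowerBasis ℤ (Rk k) := AdjoinRoot.powerBasis' (monicXk hk)

/-- monomial basis of `Rk k` indexed by `Fin k`. -/
def bR (k : ℕ) (hk : k ≠ 0) : Basis (Fin k) ℤ (Rk k) :=
  (pbR k hk).basis.reindex (finCongr (by simp [pbR, natDegXk]))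

lemma bR_apply (k : ℕ) (hk : k ≠ 0) (c : Fin k) :
    bR k hk c = root _ ^ (c : ℕ) := by
  rw [bR, Basis.reindex_apply, PowerBasis.basis_eq_pow]
  simp [pbR]
  rfl

/-- power basis of `Cyc d`. -/
def pbC (d : ℕ) : PowerBasis ℤ (Cyc d) := AdjoinRoot.powerBasis' (cyclotomic.monic d ℤ)

/-- basis of `Bk k`. -/
def bB (k : ℕ) : Basis (Σ d : k.divisors, Fin (pbC (d : ℕ)).dim) ℤ (Bk k) :=
  Pi.basis fun d => (pbC (d : ℕ)).basis

lemma root_R_pow {k N : ℕ} (h : k ∣ N) : (root ((X : ℤ[X]) ^ k - 1)) ^ N = 1 := by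
  obtain ⟨e, rfl⟩ := h
  have h1 : (root ((X : ℤ[X]) ^ k - 1)) ^ k = 1 := by
    have : (root ((X : ℤ[X]) ^ k - 1)) ^ k - 1 = 0 := by
      have := AdjoinRoot.mk_self (f := (X : ℤ[X]) ^ k - 1)
      simpa [map_sub, map_pow, mk_X] using this
    linear_combination this
  rw [pow_mul, h1, one_pow]

lemma root_C_pow {d N : ℕ} (h : d ∣ N) : (root (cyclotomic d ℤ)) ^ N = 1 := by
  obtain ⟨e, rfl⟩ := h
  have h1 : (root (cyclotomic d ℤ)) ^ d = 1 := by
    have : (root (cyclotomic d ℤ)) ^ d - 1 = 0 := by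
      have := (AdjoinRoot.mk_eq_zero).mpr (cyclotomic.dvd_X_pow_sub_one d ℤ)
      simpa [map_sub, map_pow, mk_X] using this
    linear_combination this
  rw [pow_mul, h1, one_pow]

lemma pow_mod_eq {M : Type*} [Monoid M] {x : M} {N : ℕ} (hx : x ^ N = 1) (a : ℕ) :
    x ^ a = x ^ (a % N) := by
  conv_lhs => rw [← Nat.div_add_mod a N]
  rw [pow_add, pow_mul, hx, one_pow, one_mul]

lemma pow_eq_of_modEq {M : Type*} [Monoid M] {x : M} {N a b : ℕ} (hx : x ^ N = 1)
    (h : a ≡ b [MOD N]) : x ^ a = x ^ b := by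
  rw [pow_mod_eq hx a, pow_mod_eq hx b, Nat.ModEq] at *
  rw [h]

/-- the map `ℤ[X]/(X^k-1) → ℤ[X]/Φ_d` for `d ∣ k`. -/
def psi (k d : ℕ) (h : d ∣ k) : Rk k →ₐ[ℤ] Cyc d :=
  liftHom _ (root _) (by
    rw [map_sub, map_one, aeval_X_pow, root_C_pow h, sub_self])

/-- the canonical map `Ψ_k`. -/
def Psi (k : ℕ) : Rk k →ₐ[ℤ] Bk k :=
  Pi.algHom _ _ fun d => psi k (d : ℕ) (Nat.dvd_of_mem_divisors d.2)

/-- cyclotomic divisibility used to build maps `ℤ[X]/Φ_a → ℤ[X]/Φ_N`. -/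
lemma cyclo_dvd (d₁ d₂ c : ℕ) (h₁ : 0 < d₁) (h₂ : 0 < d₂) (hd : d₂ ∣ c)
    (hc : Nat.Coprime c d₁) :
    cyclotomic (d₁ * d₂) ℤ ∣ (cyclotomic d₁ ℤ).comp (X ^ c) := by
  have hN : 0 < d₁ * d₂ := Nat.mul_pos h₁ h₂
  obtain ⟨ζ, hζ⟩ : ∃ ζ : ℂ, IsPrimitiveRoot ζ (d₁ * d₂) :=
    ⟨_, Complex.isPrimitiveRoot_exp (d₁ * d₂) hN.ne'⟩
  have hpow : IsPrimitiveRoot (ζ ^ c) d₁ := by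
    have h1 : IsPrimitiveRoot (ζ ^ d₂) d₁ := hζ.pow hN (mul_comm d₁ d₂)
    have hcop : (c / d₂).Coprime d₁ :=
      Nat.Coprime.coprime_dvd_left (Nat.div_dvd_of_dvd hd) hc
    have h2 := h1.pow_of_coprime (c / d₂) hcop
    rwa [← pow_mul, Nat.mul_div_cancel' hd] at h2
  have hmin : cyclotomic (d₁ * d₂) ℚ ∣ (cyclotomic d₁ ℚ).comp (X ^ c) := by
    rw [cyclotomic_eq_minpoly_rat hζ hN]
    apply minpoly.dvd ℚ ζ
    rw [aeval_comp, aeval_X_pow]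
    have hroot := hpow.isRoot_cyclotomic h₁
    rw [IsRoot.def, ← map_cyclotomic d₁ (algebraMap ℚ ℂ), eval_map, ← aeval_def] at hroot
    exact hroot
  rw [← map_dvd_map (Int.castRingHom ℚ) Int.cast_injective (cyclotomic.monic _ ℤ)]
  rw [Polynomial.map_comp, map_cyclotomic_int, map_cyclotomic_int, Polynomial.map_pow,
    Polynomial.map_X]
  exact hmin

/-- `ℤ[X]/Φ_a → ℤ[X]/Φ_N`, `root ↦ root ^ c`. -/
def chom (a N c : ℕ) (h : cyclotomic N ℤ ∣ (cyclotomic a ℤ).comp (X ^ c)) :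
    Cyc a →ₐ[ℤ] Cyc N :=
  liftHom _ (root _ ^ c) (by
    have hx : (root (cyclotomic N ℤ)) ^ c = aeval (root (cyclotomic N ℤ)) (X ^ c : ℤ[X]) := by
      simp
    rw [hx, ← aeval_comp, aeval_eq, mk_eq_zero]
    exact h)


lemma coprime_of_modEq_one {a k : ℕ} (h : a ≡ 1 [MOD k]) : Nat.Coprime a k := by
  have h2 : Nat.gcd k a = Nat.gcd k 1 := by
    rw [Nat.gcd_rec k a, Nat.gcd_rec k 1, h]
  simpa [Nat.gcd_comm] using h2

section CRT

/-- the gcd identity for divisors of a coprime product -/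
lemma gcd_mul_gcd (m n : ℕ) {D : ℕ} (hmn : Nat.Coprime m n) (hD : D ∈ (m * n).divisors) :
    Nat.gcd D m * Nat.gcd D n = D :=
  (Nat.gcd_mul_gcd_eq_iff_dvd_mul_of_coprime hmn).mpr (Nat.dvd_of_mem_divisors hD)

lemma cyclo_dvd_of_divisor (m n c : ℕ) (hm : m ≠ 0) (hmn : Nat.Coprime m n)
    (hc1 : c ≡ 1 [MOD m]) (hc2 : n ∣ c) {D : ℕ} (hD : D ∈ (m * n).divisors) :
    cyclotomic D ℤ ∣ (cyclotomic (Nat.gcd D m) ℤ).comp (X ^ c) := by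
  have key := gcd_mul_gcd m n hmn hD
  have hn : n ≠ 0 := by
    rintro rfl
    simp at hD
  have h := cyclo_dvd (Nat.gcd D m) (Nat.gcd D n) c
    (Nat.gcd_pos_of_pos_right D (Nat.pos_of_ne_zero hm))
    (Nat.gcd_pos_of_pos_right D (Nat.pos_of_ne_zero hn))
    (dvd_trans (Nat.gcd_dvd_right D n) hc2)
    (Nat.Coprime.coprime_dvd_right (Nat.gcd_dvd_right D m) (coprime_of_modEq_one hc1))
  rwa [key] at h

/-- first-factor part of the base-change map on codomains -/
def theta1 (m n c : ℕ) (hm : m ≠ 0) (hmn : Nat.Coprime m n)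
    (hc1 : c ≡ 1 [MOD m]) (hc2 : n ∣ c) : Bk m →ₐ[ℤ] Bk (m * n) :=
  Pi.algHom _ _ fun D =>
    (chom (Nat.gcd (D : ℕ) m) (D : ℕ) c
        (cyclo_dvd_of_divisor m n c hm hmn hc1 hc2 D.2)).comp
      (Pi.evalAlgHom _ _ (⟨Nat.gcd (D : ℕ) m,
        Nat.mem_divisors.mpr ⟨Nat.gcd_dvd_right _ _, hm⟩⟩ : m.divisors))

/-- second-factor part of the base-change map on codomains -/
def theta2 (m n c' : ℕ) (hn : n ≠ 0) (hmn : Nat.Coprime m n)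
    (hc1' : c' ≡ 1 [MOD n]) (hc2' : m ∣ c') : Bk n →ₐ[ℤ] Bk (m * n) :=
  Pi.algHom _ _ fun D =>
    (chom (Nat.gcd (D : ℕ) n) (D : ℕ) c'
        (cyclo_dvd_of_divisor n m c' hn hmn.symm hc1' hc2'
          (by simpa [Nat.mul_comm m n] using D.2))).comp
      (Pi.evalAlgHom _ _ (⟨Nat.gcd (D : ℕ) n,
        Nat.mem_divisors.mpr ⟨Nat.gcd_dvd_right _ _, hn⟩⟩ : n.divisors))

/-- base-change map on codomains -/
def theta (m n c c' : ℕ) (hm : m ≠ 0) (hn : n ≠ 0) (hmn : Nat.Coprime m n)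
    (hc1 : c ≡ 1 [MOD m]) (hc2 : n ∣ c) (hc1' : c' ≡ 1 [MOD n]) (hc2' : m ∣ c') :
    Bk m ⊗[ℤ] Bk n →ₐ[ℤ] Bk (m * n) :=
  Algebra.TensorProduct.productMap (theta1 m n c hm hmn hc1 hc2)
    (theta2 m n c' hn hmn hc1' hc2')

/-- first-factor CRT map on domains -/
def lam1 (m n c : ℕ) (hc2 : n ∣ c) : Rk m →ₐ[ℤ] Rk (m * n) :=
  liftHom _ (root _ ^ c) (by
    rw [map_sub, map_one, aeval_X_pow, ← pow_mul]
    rw [pow_eq_of_modEq (root_R_pow (dvd_refl (m * n))) (N := m * n) (b := 0)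
      (by
        have h : (m * n : ℕ) ∣ c * m := by
          obtain ⟨t, rfl⟩ := hc2
          exact ⟨t, by ring⟩
        simpa [Nat.modEq_zero_iff_dvd] using h)]
    simp)

/-- second-factor CRT map on domains -/
def lam2 (m n c' : ℕ) (hc2' : m ∣ c') : Rk n →ₐ[ℤ] Rk (m * n) :=
  liftHom _ (root _ ^ c') (by
    rw [map_sub, map_one, aeval_X_pow, ← pow_mul]
    rw [pow_eq_of_modEq (root_R_pow (dvd_refl (m * n))) (N := m * n) (b := 0)
      (by
        have h : (m * n : ℕ) ∣ c' * n := by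
          obtain ⟨t, rfl⟩ := hc2'
          exact ⟨t, by ring⟩
        simpa [Nat.modEq_zero_iff_dvd] using h)]
    simp)

/-- CRT map on domains -/
def lam (m n c c' : ℕ) (hc2 : n ∣ c) (hc2' : m ∣ c') :
    Rk m ⊗[ℤ] Rk n →ₐ[ℤ] Rk (m * n) :=
  Algebra.TensorProduct.productMap (lam1 m n c hc2) (lam2 m n c' hc2')

/-- inverse CRT map on domains -/
def laminv (m n : ℕ) : Rk (m * n) →ₐ[ℤ] Rk m ⊗[ℤ] Rk n :=
  liftHom _ (root _ ⊗ₜ root _) (by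
    rw [map_sub, map_one, aeval_X_pow, Algebra.TensorProduct.tmul_pow,
      root_R_pow (dvd_mul_right m n), root_R_pow (dvd_mul_left n m),
      Algebra.TensorProduct.one_def, sub_self])

lemma hccsum (m n c c' : ℕ) (hmn : Nat.Coprime m n)
    (hc1 : c ≡ 1 [MOD m]) (hc2 : n ∣ c) (hc1' : c' ≡ 1 [MOD n]) (hc2' : m ∣ c') :
    c + c' ≡ 1 [MOD m * n] := by
  have h1 : c + c' ≡ 1 [MOD m] := by
    have h0 : c' ≡ 0 [MOD m] := Nat.modEq_zero_iff_dvd.mpr hc2'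
    simpa using hc1.add h0
  have h2 : c + c' ≡ 1 [MOD n] := by
    have h0 : c ≡ 0 [MOD n] := Nat.modEq_zero_iff_dvd.mpr hc2
    simpa using h0.add hc1'
  exact (Nat.modEq_and_modEq_iff_modEq_mul hmn).mp ⟨h1, h2⟩

lemma lam_laminv (m n c c' : ℕ) (hmn : Nat.Coprime m n)
    (hc1 : c ≡ 1 [MOD m]) (hc2 : n ∣ c) (hc1' : c' ≡ 1 [MOD n]) (hc2' : m ∣ c') :
    (lam m n c c' hc2 hc2').comp (laminv m n) = AlgHom.id ℤ (Rk (m * n)) := by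
  apply AdjoinRoot.algHom_ext
  rw [AlgHom.comp_apply, laminv, liftHom_root]
  rw [lam, Algebra.TensorProduct.productMap_apply_tmul, lam1, lam2, liftHom_root, liftHom_root,
    ← pow_add]
  rw [pow_eq_of_modEq (root_R_pow (dvd_refl (m * n)))
    (hccsum m n c c' hmn hc1 hc2 hc1' hc2'), pow_one]
  simp

lemma laminv_lam (m n c c' : ℕ) (hc1 : c ≡ 1 [MOD m]) (hc2 : n ∣ c)
    (hc1' : c' ≡ 1 [MOD n]) (hc2' : m ∣ c') :
    (laminv m n).comp (lam m n c c' hc2 hc2') = AlgHom.id ℤ (Rk m ⊗[ℤ] Rk n) := by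
  apply Algebra.TensorProduct.ext
  · apply AdjoinRoot.algHom_ext
    simp only [AlgHom.restrictScalars_apply, AlgHom.comp_apply, Algebra.TensorProduct.includeLeft_apply]
    rw [lam, Algebra.TensorProduct.productMap_apply_tmul, lam1, liftHom_root, map_one, mul_one,
      map_pow, laminv, liftHom_root, Algebra.TensorProduct.tmul_pow]
    rw [pow_eq_of_modEq (root_R_pow (dvd_refl m)) hc1, pow_one,
      pow_eq_of_modEq (root_R_pow (dvd_refl n)) (b := 0)
        (by simpa [Nat.modEq_zero_iff_dvd] using hc2), pow_zero]
    simp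
  · apply AdjoinRoot.algHom_ext
    simp only [AlgHom.restrictScalars_apply, AlgHom.comp_apply, Algebra.TensorProduct.includeRight_apply]
    rw [lam, Algebra.TensorProduct.productMap_apply_tmul, lam2, liftHom_root, map_one, one_mul,
      map_pow, laminv, liftHom_root, Algebra.TensorProduct.tmul_pow]
    rw [pow_eq_of_modEq (root_R_pow (dvd_refl n)) hc1', pow_one,
      pow_eq_of_modEq (root_R_pow (dvd_refl m)) (b := 0)
        (by simpa [Nat.modEq_zero_iff_dvd] using hc2'), pow_zero]
    simp

/-- the CRT algebra isomorphism on domains -/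
def lamEquiv (m n c c' : ℕ) (hmn : Nat.Coprime m n) (hc1 : c ≡ 1 [MOD m]) (hc2 : n ∣ c)
    (hc1' : c' ≡ 1 [MOD n]) (hc2' : m ∣ c') : (Rk m ⊗[ℤ] Rk n) ≃ₐ[ℤ] Rk (m * n) :=
  AlgEquiv.ofAlgHom (lam m n c c' hc2 hc2') (laminv m n)
    (lam_laminv m n c c' hmn hc1 hc2 hc1' hc2') (laminv_lam m n c c' hc1 hc2 hc1' hc2')

/-- the commuting square -/
lemma square (m n c c' : ℕ) (hm : m ≠ 0) (hn : n ≠ 0) (hmn : Nat.Coprime m n)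
    (hc1 : c ≡ 1 [MOD m]) (hc2 : n ∣ c) (hc1' : c' ≡ 1 [MOD n]) (hc2' : m ∣ c') :
    (theta m n c c' hm hn hmn hc1 hc2 hc1' hc2').comp
      (Algebra.TensorProduct.map (Psi m) (Psi n)) =
    (Psi (m * n)).comp (lam m n c c' hc2 hc2') := by
  apply Algebra.TensorProduct.ext
  · apply AdjoinRoot.algHom_ext
    ext D
    simp only [AlgHom.restrictScalars_apply, AlgHom.comp_apply,
      Algebra.TensorProduct.includeLeft_apply,
      Algebra.TensorProduct.map_tmul, map_one, theta,
      Algebra.TensorProduct.productMap_apply_tmul, lam, lam1, liftHom_root]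
    simp only [theta1, theta2, Psi, Pi.algHom_apply, Pi.mul_apply, map_one, Pi.one_apply, mul_one,
      AlgHom.comp_apply, Pi.evalAlgHom_apply, psi, liftHom_root, map_pow, chom]
  · apply AdjoinRoot.algHom_ext
    ext D
    simp only [AlgHom.restrictScalars_apply, AlgHom.comp_apply,
      Algebra.TensorProduct.includeRight_apply,
      Algebra.TensorProduct.map_tmul, map_one, theta,
      Algebra.TensorProduct.productMap_apply_tmul, lam, lam2, liftHom_root]
    simp only [theta1, theta2, Psi, Pi.algHom_apply, Pi.mul_apply, map_one, Pi.one_apply, one_mul,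
      AlgHom.comp_apply, Pi.evalAlgHom_apply, psi, liftHom_root, map_pow, chom]

end CRT

section Theta

variable (m n c c' : ℕ) (hm : m ≠ 0) (hn : n ≠ 0) (hmn : Nat.Coprime m n)
  (hc1 : c ≡ 1 [MOD m]) (hc2 : n ∣ c) (hc1' : c' ≡ 1 [MOD n]) (hc2' : m ∣ c')

lemma theta_rho :
    theta m n c c' hm hn hmn hc1 hc2 hc1' hc2' ((Psi m (root _)) ⊗ₜ (Psi n (root _))) =
      fun D : (m * n).divisors => root (cyclotomic (D : ℕ) ℤ) := by
  funext D
  simp only [theta, Algebra.TensorProduct.productMap_apply_tmul, theta1, theta2, Psi,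
    Pi.algHom_apply, Pi.mul_apply, AlgHom.comp_apply, Pi.evalAlgHom_apply, psi,
    liftHom_root, chom]
  rw [← pow_add]
  rw [pow_eq_of_modEq (root_C_pow (Nat.dvd_of_mem_divisors D.2))
    (hccsum m n c c' hmn hc1 hc2 hc1' hc2'), pow_one]

lemma theta_single_one (D : (m * n).divisors) :
    theta m n c c' hm hn hmn hc1 hc2 hc1' hc2'
      ((Pi.single (⟨Nat.gcd (D : ℕ) m, Nat.mem_divisors.mpr ⟨Nat.gcd_dvd_right _ _, hm⟩⟩ :
          m.divisors) 1) ⊗ₜ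
        (Pi.single (⟨Nat.gcd (D : ℕ) n, Nat.mem_divisors.mpr ⟨Nat.gcd_dvd_right _ _, hn⟩⟩ :
          n.divisors) 1)) = Pi.single D 1 := by
  funext D'
  have hD' := gcd_mul_gcd m n hmn D'.2
  have hD := gcd_mul_gcd m n hmn D.2
  simp only [theta, Algebra.TensorProduct.productMap_apply_tmul, theta1, theta2,
    Pi.algHom_apply, Pi.mul_apply, AlgHom.comp_apply, Pi.evalAlgHom_apply]
  by_cases h3 : D' = D
  · subst h3
    rw [Pi.single_eq_same, Pi.single_eq_same, Pi.single_eq_same, map_one, map_one, mul_one]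
  · have hne : ¬(Nat.gcd (D' : ℕ) m = Nat.gcd (D : ℕ) m ∧
        Nat.gcd (D' : ℕ) n = Nat.gcd (D : ℕ) n) := by
      rintro ⟨h1, h2⟩
      exact h3 (Subtype.ext (by rw [← hD', ← hD, h1, h2]))
    by_cases h1 : (⟨Nat.gcd (D' : ℕ) m, Nat.mem_divisors.mpr ⟨Nat.gcd_dvd_right _ _, hm⟩⟩ :
        m.divisors) = ⟨Nat.gcd (D : ℕ) m, Nat.mem_divisors.mpr ⟨Nat.gcd_dvd_right _ _, hm⟩⟩
    · have h2 : (⟨Nat.gcd (D' : ℕ) n, Nat.mem_divisors.mpr ⟨Nat.gcd_dvd_right _ _, hn⟩⟩ :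
          n.divisors) ≠ ⟨Nat.gcd (D : ℕ) n, Nat.mem_divisors.mpr ⟨Nat.gcd_dvd_right _ _, hn⟩⟩ :=
        fun h2 => hne ⟨congrArg Subtype.val h1, congrArg Subtype.val h2⟩
      rw [Pi.single_eq_of_ne h2, map_zero, mul_zero, Pi.single_eq_of_ne h3]
    · rw [Pi.single_eq_of_ne h1, map_zero, zero_mul, Pi.single_eq_of_ne h3]

lemma theta_single_root_pow (D : (m * n).divisors) (k : ℕ) :
    ∃ w, theta m n c c' hm hn hmn hc1 hc2 hc1' hc2' w =
      Pi.single D (root (cyclotomic (D : ℕ) ℤ) ^ k) := by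
  refine ⟨((Pi.single (⟨Nat.gcd (D : ℕ) m, Nat.mem_divisors.mpr ⟨Nat.gcd_dvd_right _ _, hm⟩⟩ :
          m.divisors) 1) ⊗ₜ
        (Pi.single (⟨Nat.gcd (D : ℕ) n, Nat.mem_divisors.mpr ⟨Nat.gcd_dvd_right _ _, hn⟩⟩ :
          n.divisors) 1)) * ((Psi m (root _)) ⊗ₜ (Psi n (root _))) ^ k, ?_⟩
  rw [map_mul, map_pow, theta_single_one m n c c' hm hn hmn hc1 hc2 hc1' hc2' D,
    theta_rho m n c c' hm hn hmn hc1 hc2 hc1' hc2']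
  funext D'
  by_cases h : D' = D
  · subst h
    simp [Pi.single_eq_same]
  · simp [Pi.single_eq_of_ne h]

lemma theta_surjective :
    Function.Surjective (theta m n c c' hm hn hmn hc1 hc2 hc1' hc2') := by
  have hsingle : ∀ (D : (m * n).divisors) (z : Cyc (D : ℕ)),
      ∃ w, theta m n c c' hm hn hmn hc1 hc2 hc1' hc2' w = Pi.single D z := by
    intro D z
    induction z using AdjoinRoot.induction_on with
    | ih p =>
      induction p using Polynomial.induction_on' with
      | add p q hp hq =>
        obtain ⟨wp, hwp⟩ := hp
        obtain ⟨wq, hwq⟩ := hq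
        exact ⟨wp + wq, by rw [map_add, hwp, hwq, ← Pi.single_add, ← map_add]⟩
      | monomial k a =>
        obtain ⟨w, hw⟩ := theta_single_root_pow m n c c' hm hn hmn hc1 hc2 hc1' hc2' D k
        refine ⟨a • w, ?_⟩
        rw [map_smul, hw, ← Pi.single_smul]
        congr 1
        rw [← C_mul_X_pow_eq_monomial, map_mul, mk_C, map_pow, mk_X, Algebra.smul_def]
        rfl
  intro x
  choose w hw using hsingle
  refine ⟨∑ D, w D (x D), ?_⟩
  rw [map_sum]
  simp only [hw]
  funext i
  rw [Finset.sum_apply]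
  exact Fintype.sum_pi_single i x

lemma cardB (k : ℕ) (hk : k ≠ 0) :
    Fintype.card (Σ d : k.divisors, Fin (pbC (d : ℕ)).dim) = k := by
  rw [Fintype.card_sigma]
  have h : ∀ d : k.divisors, Fintype.card (Fin (pbC (d : ℕ)).dim) = (d : ℕ).totient := by
    intro d
    rw [Fintype.card_fin]
    show (cyclotomic (d : ℕ) ℤ).natDegree = (d : ℕ).totient
    exact natDegree_cyclotomic _ _
  calc (∑ d : k.divisors, Fintype.card (Fin (pbC (d : ℕ)).dim))
      = ∑ d : k.divisors, (d : ℕ).totient := by simp only [h]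
    _ = ∑ d ∈ k.divisors, d.totient := Finset.sum_coe_sort _ _
    _ = k := Nat.sum_totient k

lemma theta_injective :
    Function.Injective (theta m n c c' hm hn hmn hc1 hc2 hc1' hc2') := by
  have hmn0 : m * n ≠ 0 := Nat.mul_ne_zero hm hn
  have hcard : Fintype.card (Σ d : (m * n).divisors, Fin (pbC (d : ℕ)).dim) =
      Fintype.card ((Σ d : m.divisors, Fin (pbC (d : ℕ)).dim) ×
        (Σ d : n.divisors, Fin (pbC (d : ℕ)).dim)) := by
    rw [Fintype.card_prod, cardB m hm, cardB n hn, cardB (m * n) hmn0]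
  haveI : Module.Finite ℤ (Bk (m * n)) := Module.Finite.of_basis (bB (m * n))
  let E : Bk (m * n) ≃ₗ[ℤ] Bk m ⊗[ℤ] Bk n :=
    (bB (m * n)).equiv ((bB m).tensorProduct (bB n)) (Fintype.equivOfCardEq hcard)
  have hendo : Function.Surjective
      ((theta m n c c' hm hn hmn hc1 hc2 hc1' hc2').toLinearMap.comp E.toLinearMap) :=
    (theta_surjective m n c c' hm hn hmn hc1 hc2 hc1' hc2').comp E.surjective
  have hinj := OrzechProperty.injective_of_surjective_endomorphism
    ((theta m n c c' hm hn hmn hc1 hc2 hc1' hc2').toLinearMap.comp E.toLinearMap) hendo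
  intro x y hxy
  have := hinj (a₁ := E.symm x) (a₂ := E.symm y) (by
    change theta m n c c' hm hn hmn hc1 hc2 hc1' hc2' (E (E.symm x)) =
      theta m n c c' hm hn hmn hc1 hc2 hc1' hc2' (E (E.symm y))
    rw [E.apply_symm_apply, E.apply_symm_apply]
    exact hxy)
  exact (E.symm.injective this : x = y)

/-- the base-change isomorphism on codomains, as a linear equivalence -/
def thetaEquiv : (Bk m ⊗[ℤ] Bk n) ≃ₗ[ℤ] Bk (m * n) :=
  LinearEquiv.ofBijective (theta m n c c' hm hn hmn hc1 hc2 hc1' hc2').toLinearMap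
    ⟨theta_injective m n c c' hm hn hmn hc1 hc2 hc1' hc2',
     theta_surjective m n c c' hm hn hmn hc1 hc2 hc1' hc2'⟩

end Theta


section Index

lemma rowPairs_length (k : ℕ) : (rowPairs k).length = k := by
  have h1 : (rowPairs k).length = ((k.divisors.sort (· ≤ ·)).map Nat.totient).sum := by
    simp [rowPairs, Function.comp_def]
  rw [h1, ← Multiset.sum_coe, ← Multiset.map_coe, Finset.sort_eq, ← Finset.sum_eq_multiset_sum]
  exact Nat.sum_totient k

lemma mem_rowPairs {k : ℕ} {p : ℕ × ℕ} (h : p ∈ rowPairs k) :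
    p.1 ∈ k.divisors ∧ p.2 < p.1.totient := by
  simp only [rowPairs, List.mem_flatMap, List.mem_map, Finset.mem_sort, List.mem_range] at h
  obtain ⟨d, hd, i, hi, rfl⟩ := h
  exact ⟨hd, hi⟩

lemma pair_mem_rowPairs {k d i : ℕ} (hd : d ∈ k.divisors) (hi : i < d.totient) :
    (d, i) ∈ rowPairs k := by
  simp only [rowPairs, List.mem_flatMap, List.mem_map, Finset.mem_sort, List.mem_range]
  exact ⟨d, hd, i, hi, rfl⟩

lemma rowPairs_get_mem (k : ℕ) (i : Fin (rowPairs k).length) :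
    (rowPairs k).get i ∈ rowPairs k := by
  rw [List.get_eq_getElem]
  exact List.getElem_mem _

/-- the indexing function underlying the row-index equivalence -/
def Fidx (k : ℕ) (r : Fin k) : Σ d : k.divisors, Fin (pbC (d : ℕ)).dim :=
  ⟨⟨((rowPairs k).get (Fin.cast (rowPairs_length k).symm r)).1,
     (mem_rowPairs (rowPairs_get_mem k _)).1⟩,
   ⟨((rowPairs k).get (Fin.cast (rowPairs_length k).symm r)).2, by
      show _ < (cyclotomic _ ℤ).natDegree
      rw [natDegree_cyclotomic]
      exact (mem_rowPairs (rowPairs_get_mem k _)).2⟩⟩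

lemma Fidx_surjective (k : ℕ) : Function.Surjective (Fidx k) := by
  rintro ⟨⟨d, hd⟩, ⟨i, hi⟩⟩
  have hi' : i < d.totient := by
    have h : (pbC d).dim = d.totient := by
      show (cyclotomic d ℤ).natDegree = d.totient
      rw [natDegree_cyclotomic]
    rwa [h] at hi
  obtain ⟨j, hj⟩ := List.mem_iff_get.mp (pair_mem_rowPairs hd hi')
  refine ⟨Fin.cast (rowPairs_length k) j, ?_⟩
  have hget : (rowPairs k).get
      (Fin.cast (rowPairs_length k).symm (Fin.cast (rowPairs_length k) j)) = (d, i) := by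
    have h0 : (Fin.cast (rowPairs_length k).symm (Fin.cast (rowPairs_length k) j)) = j := by
      apply Fin.ext
      simp
    rw [h0, hj]
  refine Sigma.ext (Subtype.ext ?_) ?_
  · exact congrArg Prod.fst hget
  · refine (Fin.heq_ext_iff ?_).mpr (congrArg Prod.snd hget)
    exact congrArg (fun t => (pbC t).dim) (congrArg Prod.fst hget)

/-- the row-index equivalence -/
def eIdx (k : ℕ) (hk : k ≠ 0) : Fin k ≃ Σ d : k.divisors, Fin (pbC (d : ℕ)).dim :=
  Equiv.ofBijective (Fidx k) ((Fintype.bijective_iff_surjective_and_card _).mpr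
    ⟨Fidx_surjective k, by rw [Fintype.card_fin, cardB k hk]⟩)

lemma bB_repr_Psi_pow (k : ℕ) (j : ℕ) (idx : Σ d : k.divisors, Fin (pbC (d : ℕ)).dim) :
    (bB k).repr (Psi k (root ((X : ℤ[X]) ^ k - 1) ^ j)) idx =
      (((X : ℤ[X]) ^ j) %ₘ cyclotomic (idx.1 : ℕ) ℤ).coeff (idx.2 : ℕ) := by
  obtain ⟨d, i⟩ := idx
  rw [bB, Pi.basis_repr]
  have hcomp : Psi k (root ((X : ℤ[X]) ^ k - 1) ^ j) d =
      AdjoinRoot.mk _ ((X : ℤ[X]) ^ j) := by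
    rw [Psi, Pi.algHom_apply, map_pow, psi, liftHom_root, ← mk_X, ← map_pow]
  rw [hcomp]
  show (AdjoinRoot.powerBasisAux' (cyclotomic.monic _ ℤ)).repr _ i = _
  erw [AdjoinRoot.powerBasisAux'_repr_apply_to_fun, AdjoinRoot.modByMonicHom_mk]

/-- identification of `Amat k` as the matrix of `Psi k` -/
lemma toMatrix_Psi (k : ℕ) (hk : k ≠ 0) :
    LinearMap.toMatrix (bR k hk) ((bB k).reindex (eIdx k hk).symm) (Psi k).toLinearMap
      = Amat k := by
  ext r c
  rw [LinearMap.toMatrix_apply]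
  have hval : (Psi k).toLinearMap ((bR k hk) c) =
      Psi k (root ((X : ℤ[X]) ^ k - 1) ^ (c : ℕ)) := by
    rw [AlgHom.toLinearMap_apply, bR_apply]
  rw [hval, Basis.repr_reindex_apply, Equiv.symm_symm, bB_repr_Psi_pow]
  have hp : (rowPairs k).getD (r : ℕ) (1, 0)
      = (rowPairs k).get (Fin.cast (rowPairs_length k).symm r) := by
    rw [List.getD_eq_getElem _ _ (by rw [rowPairs_length]; exact r.2), List.get_eq_getElem]
    rfl
  simp only [Amat, Matrix.of_apply]
  rw [hp]
  rfl

end Index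

end

end SmithKron

open SmithKron

open scoped TensorProduct

/-- `S(A_m ⊗ A_n) = S(A_{mn})` for coprime `m`, `n`: the Kronecker product
`A_m ⊗ A_n` and `A_{mn}` have the same Smith normal form, i.e. they are equivalent via
unimodular transformations (after identifying the index types). -/
theorem smith_kronecker (m n : ℕ) (hm : 0 < m) (hn : 0 < n) (hmn : Nat.Coprime m n) :
    ∃ (U V : Matrix (Fin m × Fin n) (Fin m × Fin n) ℤ)
      (e₁ e₂ : Fin (m * n) ≃ Fin m × Fin n),
      IsUnit U.det ∧ IsUnit V.det ∧
        U * (Amat m ⊗ₖ Amat n) * V = (Amat (m * n)).reindex e₁ e₂ := by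
  classical
  have hm0 : m ≠ 0 := hm.ne'
  have hn0 : n ≠ 0 := hn.ne'
  have hmn0 : m * n ≠ 0 := Nat.mul_ne_zero hm0 hn0
  obtain ⟨c, hcm, hcn⟩ := Nat.chineseRemainder hmn 1 0
  obtain ⟨c', hc'm, hc'n⟩ := Nat.chineseRemainder hmn 0 1
  have hc2 : n ∣ c := (Nat.modEq_zero_iff_dvd).mp hcn
  have hc2' : m ∣ c' := (Nat.modEq_zero_iff_dvd).mp hc'm
  set e : Fin (m * n) ≃ Fin m × Fin n := finProdFinEquiv.symm with he
  set bT1 : Basis (Fin m × Fin n) ℤ _ := (bR m hm0).tensorProduct (bR n hn0) with hbT1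
  set bT2 : Basis (Fin m × Fin n) ℤ _ :=
    ((bB m).reindex (eIdx m hm0).symm).tensorProduct ((bB n).reindex (eIdx n hn0).symm) with hbT2
  set f : (Rk m ⊗[ℤ] Rk n) →ₗ[ℤ] (Bk m ⊗[ℤ] Bk n) :=
    TensorProduct.map (Psi m).toLinearMap (Psi n).toLinearMap with hf
  have hK : LinearMap.toMatrix bT1 bT2 f = Amat m ⊗ₖ Amat n := by
    rw [hf, hbT1, hbT2, TensorProduct.toMatrix_map, toMatrix_Psi m hm0, toMatrix_Psi n hn0]
  set α := lamEquiv m n c c' hmn hcm hc2 hc'n hc2' with hα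
  set Θ := thetaEquiv m n c c' hm0 hn0 hmn hcm hc2 hc'n hc2' with hΘ
  set b1' : Basis (Fin m × Fin n) ℤ (Rk m ⊗[ℤ] Rk n) :=
    ((bR (m * n) hmn0).map α.symm.toLinearEquiv).reindex e with hb1'
  set b2' : Basis (Fin m × Fin n) ℤ (Bk m ⊗[ℤ] Bk n) :=
    (((bB (m * n)).reindex (eIdx (m * n) hmn0).symm).map Θ.symm).reindex e with hb2'
  have hmap : f = (Algebra.TensorProduct.map (Psi m) (Psi n)).toLinearMap := by
    apply TensorProduct.ext'
    intro a b
    simp [hf, Algebra.TensorProduct.map_tmul, TensorProduct.AlgebraTensorModule.map_tmul]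
    erw [TensorProduct.map_tmul]
  have hA : LinearMap.toMatrix b1' b2' f = ((Amat (m * n)).reindex e e : _) := by
    ext r cc
    erw [LinearMap.toMatrix_apply, hb1', hb2', Basis.reindex_apply, Basis.repr_reindex_apply,
      Basis.map_apply, Basis.map_repr]
    have hsq : Θ.symm.symm (f (α.symm.toLinearEquiv ((bR (m * n) hmn0) (e.symm cc)))) =
        Psi (m * n) ((bR (m * n) hmn0) (e.symm cc)) := by
      rw [LinearEquiv.symm_symm]
      have h1 : ∀ x : Rk (m * n), Θ (f (α.symm.toLinearEquiv x)) = Psi (m * n) x := by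
        intro x
        have h2 : Θ (f (α.symm.toLinearEquiv x)) =
            theta m n c c' hm0 hn0 hmn hcm hc2 hc'n hc2'
              ((Algebra.TensorProduct.map (Psi m) (Psi n)) (α.symm x)) := by
          rw [hmap]
          rfl
        rw [h2, ← AlgHom.comp_apply, square m n c c' hm0 hn0 hmn hcm hc2 hc'n hc2',
          AlgHom.comp_apply]
        have h3 : lam m n c c' hc2 hc2' (α.symm x) = α (α.symm x) := rfl
        rw [h3, AlgEquiv.apply_symm_apply]
      exact h1 _
    rw [LinearEquiv.trans_apply, hsq]
    rw [show Psi (m * n) ((bR (m * n) hmn0) (e.symm cc)) =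
      (Psi (m * n)).toLinearMap ((bR (m * n) hmn0) (e.symm cc)) from rfl]
    rw [← LinearMap.toMatrix_apply, toMatrix_Psi (m * n) hmn0]
    rw [Matrix.reindex_apply]
    rfl
  refine ⟨b2'.toMatrix bT2, bT1.toMatrix b1', e, e, ?_, ?_, ?_⟩
  · exact IsUnit.of_mul_eq_one (bT2.toMatrix b2').det (by
      erw [← Matrix.det_mul, Basis.toMatrix_mul_toMatrix_flip, Matrix.det_one])
  · exact IsUnit.of_mul_eq_one (b1'.toMatrix bT1).det (by
      erw [← Matrix.det_mul, Basis.toMatrix_mul_toMatrix_flip, Matrix.det_one])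
  · erw [← hK, basis_toMatrix_mul_linearMap_toMatrix_mul_basis_toMatrix, hA]
end

section
/- For a prime p and e ≥ 1, det(A_{p^e}) = (−1)^{p^e − 1} · p^{(p^e − 1)/(p − 1)}, where A_{p^e} is the matrix of the canonical map ℤ[X]/(X^{p^e}−1) → ⊕_{j=0}^{e} ℤ[X]/Φ_{p^j}(X) in the standard monomial bases. -/
open Polynomial

namespace DetAmat
open Finset Matrix

noncomputable def ent (n r c : ℕ) : ℤ :=
  (((X : ℤ[X]) ^ c) %ₘ cyclotomic ((rowPairs n).getD r (1, 0)).1 ℤ).coeff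
    ((rowPairs n).getD r (1, 0)).2

lemma Amat_eq (n : ℕ) (r c : Fin n) : Amat n r c = ent n (r : ℕ) (c : ℕ) := rfl

lemma sort_divisors {p : ℕ} (hp : p.Prime) (e : ℕ) :
    (Nat.divisors (p ^ e)).sort (· ≤ ·) = (List.range (e + 1)).map (p ^ ·) := by
  refine (fun h1 h2 h3 => List.Perm.eq_of_pairwise' (r := (· ≤ ·)) h2 h3 h1) ?_ ?_ ?_
  · apply List.perm_of_nodup_nodup_toFinset_eq (Finset.sort_nodup _ _)
    · exact (List.nodup_range (n := _)).map (Nat.pow_right_injective hp.two_le)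
    · rw [Finset.sort_toFinset, Nat.divisors_prime_pow hp]
      ext x
      simp
  · exact Finset.pairwise_sort _ _
  · rw [List.pairwise_map]
    exact (List.pairwise_lt_range (n := _)).imp fun h => Nat.pow_le_pow_right hp.pos h.le

lemma totient_pp_succ' {p : ℕ} (hp : p.Prime) (e : ℕ) :
    (p ^ (e + 1)).totient = p ^ (e + 1) - p ^ e := by
  rw [Nat.totient_prime_pow_succ hp, Nat.mul_sub, pow_succ, mul_one]

lemma rowPairs_one : rowPairs 1 = [(1, 0)] := by
  simp [rowPairs, Nat.divisors_one, List.range_succ]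

lemma rowPairs_succ {p : ℕ} (hp : p.Prime) (e : ℕ) :
    rowPairs (p ^ (e + 1)) =
      rowPairs (p ^ e) ++ (List.range (p ^ (e + 1)).totient).map fun i => (p ^ (e + 1), i) := by
  unfold rowPairs
  rw [sort_divisors hp, sort_divisors hp, List.range_succ, List.map_append,
    List.flatMap_append]
  simp

lemma length_rowPairs {p : ℕ} (hp : p.Prime) (e : ℕ) :
    (rowPairs (p ^ e)).length = p ^ e := by
  induction e with
  | zero => rw [pow_zero, rowPairs_one]; rfl
  | succ e ih =>
    rw [rowPairs_succ hp, List.length_append, ih, List.length_map, List.length_range,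
      Nat.totient_prime_pow_succ hp]
    have h1 : p ^ (e + 1) = p ^ e * p := pow_succ p e
    have h2 : p ^ e * (p - 1) = p ^ e * p - p ^ e := by rw [Nat.mul_sub, mul_one]
    have h3 : p ^ e ≤ p ^ e * p := Nat.le_mul_of_pos_right _ hp.pos
    omega

lemma mem_rowPairs {n : ℕ} {x : ℕ × ℕ} (hx : x ∈ rowPairs n) :
    x.1 ∣ n ∧ n ≠ 0 ∧ x.2 < x.1.totient := by
  unfold rowPairs at hx
  rw [List.mem_flatMap] at hx
  obtain ⟨d, hd, hx⟩ := hx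
  rw [Finset.mem_sort, Nat.mem_divisors] at hd
  rw [List.mem_map] at hx
  obtain ⟨i, hi, rfl⟩ := hx
  exact ⟨hd.1, hd.2, by simpa using hi⟩

lemma getD_rowPairs_mem {n r : ℕ} (hr : r < (rowPairs n).length) :
    (rowPairs n).getD r (1, 0) ∈ rowPairs n := by
  rw [List.getD_eq_getElem _ _ hr]
  exact List.getElem_mem _

lemma getD_rowPairs_lo {p : ℕ} (hp : p.Prime) {e r : ℕ} (hr : r < p ^ e) :
    (rowPairs (p ^ (e + 1))).getD r (1, 0) = (rowPairs (p ^ e)).getD r (1, 0) := by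
  rw [rowPairs_succ hp, List.getD_append]
  rw [length_rowPairs hp]; exact hr

lemma getD_rowPairs_hi {p : ℕ} (hp : p.Prime) {e r : ℕ} (h1 : p ^ e ≤ r)
    (h2 : r < p ^ (e + 1)) :
    (rowPairs (p ^ (e + 1))).getD r (1, 0) = (p ^ (e + 1), r - p ^ e) := by
  rw [rowPairs_succ hp, List.getD_append_right _ _ _ _ (by rw [length_rowPairs hp]; exact h1),
    length_rowPairs hp]
  have hlt : r - p ^ e < (p ^ (e + 1)).totient := by
    rw [totient_pp_succ' hp]
    omega
  rw [List.getD_eq_getElem _ _ (by simpa using hlt)]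
  simp

end DetAmat

namespace DetAmat
open Finset Matrix Polynomial

lemma X_pow_mod_periodic {d m : ℕ} (hd : d ∣ m) (hm : 0 < m) (c : ℕ) :
    ((X : ℤ[X]) ^ c) %ₘ cyclotomic d ℤ = (X ^ (c % m)) %ₘ cyclotomic d ℤ := by
  rw [← sub_eq_zero, ← Polynomial.sub_modByMonic,
    Polynomial.modByMonic_eq_zero_iff_dvd (cyclotomic.monic d ℤ)]
  have h1 : (X : ℤ[X]) ^ c - X ^ (c % m) = X ^ (c % m) * ((X ^ m) ^ (c / m) - 1) := by
    rw [mul_sub, mul_one, ← pow_mul, ← pow_add]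
    rw [Nat.mod_add_div]
  rw [h1]
  apply Dvd.dvd.mul_left
  calc cyclotomic d ℤ ∣ X ^ d - 1 := cyclotomic.dvd_X_pow_sub_one d ℤ
    _ ∣ (X ^ d) ^ (m / d) - 1 := by simpa using sub_dvd_pow_sub_pow ((X : ℤ[X]) ^ d) 1 (m / d)
    _ = X ^ m - 1 := by rw [← pow_mul, Nat.mul_div_cancel' hd]
    _ ∣ (X ^ m) ^ (c / m) - 1 := by simpa using sub_dvd_pow_sub_pow ((X : ℤ[X]) ^ m) 1 (c / m)

lemma X_pow_mod_hi {p : ℕ} (hp : p.Prime) (e : ℕ) {c : ℕ}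
    (h1 : p ^ (e + 1) - p ^ e ≤ c) (h2 : c < p ^ (e + 1)) :
    ((X : ℤ[X]) ^ c) %ₘ cyclotomic (p ^ (e + 1)) ℤ =
      -∑ k ∈ Finset.range (p - 1), X ^ (c - (p ^ (e + 1) - p ^ e) + k * p ^ e) := by
  have hpe : 0 < p ^ e := pow_pos hp.pos e
  have hple : p ^ e ≤ p ^ (e + 1) := Nat.pow_le_pow_right hp.pos (Nat.le_succ e)
  set φd := p ^ (e + 1) - p ^ e with hφd
  set t := c - φd with ht
  have htm : t < p ^ e := by omega
  have hφm : φd = (p - 1) * p ^ e := by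
    rw [hφd, Nat.sub_mul, one_mul, ← pow_succ']
  -- key : X^t * Φ = ∑_{k<p} X^(t + k p^e)
  have hkey : (X : ℤ[X]) ^ t * cyclotomic (p ^ (e + 1)) ℤ
      = ∑ k ∈ Finset.range p, X ^ (t + k * p ^ e) := by
    rw [cyclotomic_prime_pow_eq_geom_sum hp, Finset.mul_sum]
    refine Finset.sum_congr rfl fun k _ => ?_
    rw [← pow_mul, ← pow_add, Nat.mul_comm]
  have hsplit : ∑ k ∈ Finset.range p, (X : ℤ[X]) ^ (t + k * p ^ e)
      = (∑ k ∈ Finset.range (p - 1), X ^ (t + k * p ^ e)) + X ^ c := by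
    have hp1 : p = (p - 1) + 1 := by have := hp.two_le; omega
    rw [hp1, Finset.sum_range_succ, ← hp1]
    congr 2
    omega
  have hXc : (X : ℤ[X]) ^ c
      = X ^ t * cyclotomic (p ^ (e + 1)) ℤ - ∑ k ∈ Finset.range (p - 1), X ^ (t + k * p ^ e) := by
    rw [hkey, hsplit]; ring
  rw [hXc, Polynomial.sub_modByMonic,
    (Polynomial.modByMonic_eq_zero_iff_dvd (cyclotomic.monic _ ℤ)).mpr (dvd_mul_left _ _),
    zero_sub, neg_inj,
    Polynomial.modByMonic_eq_self_iff (cyclotomic.monic _ ℤ)]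
  rw [degree_cyclotomic]
  apply lt_of_le_of_lt (Polynomial.degree_sum_le _ _)
  rw [Finset.sup_lt_iff (WithBot.bot_lt_coe _)]
  intro k hk
  rw [Polynomial.degree_X_pow]
  rw [Finset.mem_range] at hk
  have h8 : k * p ^ e ≤ (p - 2) * p ^ e := Nat.mul_le_mul_right _ (by omega)
  have h9 : (p - 2) * p ^ e + p ^ e = p ^ e * (p - 1) := by
    obtain ⟨q, rfl⟩ := Nat.exists_eq_add_of_le hp.two_le
    have e1 : 2 + q - 2 = q := by omega
    have e2 : 2 + q - 1 = q + 1 := by omega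
    rw [e1, e2]; ring
  rw [Nat.totient_prime_pow_succ hp]
  exact_mod_cast (by omega : t + k * p ^ e < p ^ e * (p - 1))

end DetAmat

namespace DetAmat
open Finset Matrix Polynomial

lemma sum_indicator_mod {m q t i : ℕ} (hm : 0 < m) (ht : t < m) (hi : i < q * m) :
    (∑ k ∈ Finset.range q, if i = t + k * m then (1 : ℤ) else 0)
      = if i % m = t then 1 else 0 := by
  by_cases h : i % m = t
  · rw [if_pos h]
    rw [Finset.sum_eq_single (i / m)]
    · rw [if_pos]
      have hdm := Nat.mod_add_div' i m
      omega
    · intro k hk hkne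
      rw [if_neg]
      intro hik
      apply hkne
      subst hik
      rw [Nat.add_mul_div_right _ _ hm, Nat.div_eq_of_lt ht, Nat.zero_add]
    · intro hmem
      exfalso
      apply hmem
      rw [Finset.mem_range]
      exact Nat.div_lt_of_lt_mul (by rwa [Nat.mul_comm m q])
  · rw [if_neg h]
    apply Finset.sum_eq_zero
    intro k _
    rw [if_neg]
    intro hik
    apply h
    subst hik
    rw [Nat.add_mul_mod_self_right, Nat.mod_eq_of_lt ht]

lemma ent_lo {p : ℕ} (hp : p.Prime) {e r : ℕ} (c : ℕ) (hr : r < p ^ e) :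
    ent (p ^ (e + 1)) r c = ent (p ^ e) r (c % p ^ e) := by
  unfold ent
  rw [getD_rowPairs_lo hp hr]
  have hmem := getD_rowPairs_mem (n := p ^ e) (r := r) (by rw [length_rowPairs hp]; exact hr)
  obtain ⟨hdvd, -, -⟩ := mem_rowPairs hmem
  rw [X_pow_mod_periodic hdvd (pow_pos hp.pos e) c]

lemma ent_hi {p : ℕ} (hp : p.Prime) {e r c : ℕ} (h1 : p ^ e ≤ r) (h2 : r < p ^ (e + 1))
    (h3 : c < p ^ (e + 1)) :
    ent (p ^ (e + 1)) r c =
      if c < p ^ (e + 1) - p ^ e then (if r - p ^ e = c then 1 else 0)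
      else (if (r - p ^ e) % p ^ e = c % p ^ e then -1 else 0) := by
  have hpe : 0 < p ^ e := pow_pos hp.pos e
  have hple : p ^ e ≤ p ^ (e + 1) := Nat.pow_le_pow_right hp.pos (Nat.le_succ e)
  have hφm : p ^ (e + 1) - p ^ e = (p - 1) * p ^ e := by
    rw [Nat.sub_mul, one_mul, ← pow_succ']
  have hi : r - p ^ e < p ^ (e + 1) - p ^ e := by omega
  unfold ent
  rw [getD_rowPairs_hi hp h1 h2]
  by_cases hc : c < p ^ (e + 1) - p ^ e
  · rw [if_pos hc]
    have hdeg : ((X : ℤ[X]) ^ c).degree < (cyclotomic (p ^ (e + 1)) ℤ).degree := by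
      rw [degree_cyclotomic, degree_X_pow, totient_pp_succ' hp]
      exact_mod_cast hc
    rw [(Polynomial.modByMonic_eq_self_iff (cyclotomic.monic _ ℤ)).mpr hdeg, coeff_X_pow]
  · rw [if_neg hc]
    push_neg at hc
    rw [X_pow_mod_hi hp e hc h3]
    simp only [coeff_neg, finset_sum_coeff, coeff_X_pow]
    rw [sum_indicator_mod hpe (by omega) (by omega)]
    have hmod : c % p ^ e = c - (p ^ (e + 1) - p ^ e) := by
      have h4 : c - (p ^ (e + 1) - p ^ e) < p ^ e := by omega
      have h5 : c = (c - (p ^ (e + 1) - p ^ e)) + (p - 1) * p ^ e := by omega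
      conv_lhs => rw [h5]
      rw [Nat.add_mul_mod_self_right, Nat.mod_eq_of_lt h4]
    rw [hmod]
    by_cases hcond : (r - p ^ e) % p ^ e = c - (p ^ (e + 1) - p ^ e)
    · rw [if_pos hcond, if_pos hcond]
    · rw [if_neg hcond, if_neg hcond, neg_zero]

end DetAmat

namespace DetAmat
open Finset Matrix Polynomial Equiv

lemma sum_strided (m t : ℕ) (ht : t < m) (v : ℤ) (K : ℕ) :
    (∑ j ∈ Finset.range (K * m), if j % m = t then v else 0) = K * v := by
  induction K with
  | zero => simp
  | succ K ih =>
    have hsm : (K + 1) * m = K * m + m := by ring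
    rw [hsm, Finset.range_eq_Ico,
      ← Finset.sum_Ico_consecutive _ (Nat.zero_le (K * m)) (Nat.le_add_right _ m),
      ← Finset.range_eq_Ico, ih, Finset.sum_Ico_eq_sum_range]
    have hconst : ∀ j ∈ Finset.range (K * m + m - K * m),
        (if (K * m + j) % m = t then v else 0) = (if j = t then v else 0) := by
      intro j hj
      rw [Finset.mem_range] at hj
      rw [Nat.add_comm, Nat.add_mul_mod_self_right, Nat.mod_eq_of_lt (by omega)]
    rw [Finset.sum_congr rfl hconst, Finset.sum_ite_eq' (Finset.range (K * m + m - K * m)) t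
      (fun _ => v), if_pos (Finset.mem_range.mpr (by omega))]
    push_cast
    ring

open Fin.NatCast in
lemma addRight_natCast_eq_pow (N k : ℕ) :
    Equiv.addRight ((k : Fin (N + 1))) = (finRotate (N + 1)) ^ k := by
  induction k with
  | zero => ext x; simp
  | succ k ih =>
    ext x
    rw [pow_succ', Equiv.Perm.mul_apply, ← ih]
    simp only [Equiv.coe_addRight, finRotate_succ_apply]
    rw [Nat.cast_add, Nat.cast_one, ← add_assoc]

open Fin.NatCast in
lemma sign_addRight_natCast {N : ℕ} [NeZero N] (k : ℕ) :
    ((Equiv.Perm.sign (Equiv.addRight ((k : Fin N)))) : ℤ) = (-1) ^ ((N - 1) * k) := by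
  rcases N with _ | N'
  · exact absurd rfl (NeZero.ne 0)
  · rw [addRight_natCast_eq_pow, map_pow, sign_finRotate, Nat.succ_sub_one]
    push_cast
    rw [← pow_mul]

end DetAmat

namespace DetAmat
open Finset Matrix Polynomial Equiv

open Fin.NatCast in
set_option maxHeartbeats 1000000 in
lemma det_structure {m φd p' : ℕ} (hm : 0 < m) (hp' : 0 < p') (hφ : φd = p' * m)
    (B : Matrix (Fin m) (Fin m) ℤ) (A : Matrix (Fin (φd + m)) (Fin (φd + m)) ℤ)
    (hA1 : ∀ r c : Fin (φd + m), (r : ℕ) < m →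
      A r c = B ⟨(r : ℕ) % m, Nat.mod_lt _ hm⟩ ⟨(c : ℕ) % m, Nat.mod_lt _ hm⟩)
    (hA2 : ∀ r c : Fin (φd + m), m ≤ (r : ℕ) →
      A r c = if (c : ℕ) < φd then (if (r : ℕ) - m = (c : ℕ) then 1 else 0)
        else (if ((r : ℕ) - m) % m = (c : ℕ) % m then -1 else 0)) :
    A.det = (-1) ^ ((φd + m - 1) * m) * ((p' + 1 : ℕ) : ℤ) ^ m * B.det := by
  have hφpos : 0 < φd := by rw [hφ]; exact Nat.mul_pos hp' hm
  haveI : NeZero (φd + m) := ⟨by omega⟩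
  -- the unipotent column-operation matrix
  set U : Matrix (Fin (φd + m)) (Fin (φd + m)) ℤ := Matrix.of fun r c =>
    if (r : ℕ) = (c : ℕ) then 1
    else if φd ≤ (c : ℕ) ∧ (r : ℕ) < φd ∧ (r : ℕ) % m = (c : ℕ) % m then 1 else 0 with hU
  -- the resulting matrix
  set M : Matrix (Fin (φd + m)) (Fin (φd + m)) ℤ := Matrix.of fun r c =>
    if (c : ℕ) < φd then A r c
    else if (r : ℕ) < m then
      ((p' + 1 : ℕ) : ℤ) * B ⟨(r : ℕ) % m, Nat.mod_lt _ hm⟩ ⟨((c : ℕ) - φd) % m, Nat.mod_lt _ hm⟩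
    else 0 with hM
  have hUtri : U.BlockTriangular id := by
    intro i j hij
    have hij' : (j : ℕ) < (i : ℕ) := hij
    show (if (i : ℕ) = (j : ℕ) then (1 : ℤ)
      else if φd ≤ (j : ℕ) ∧ (i : ℕ) < φd ∧ (i : ℕ) % m = (j : ℕ) % m then 1 else 0) = 0
    rw [if_neg (by omega), if_neg (by omega)]
  have hdetU : U.det = 1 := by
    rw [Matrix.det_of_upperTriangular hUtri]
    apply Finset.prod_eq_one
    intro i _
    show (if (i : ℕ) = (i : ℕ) then (1 : ℤ) else _) = 1
    rw [if_pos rfl]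
  have hcount : ∀ t : ℕ, t < m → ∀ v : ℤ,
      (∑ j : Fin (φd + m), if (j : ℕ) < φd ∧ (j : ℕ) % m = t then v else 0) = p' * v := by
    intro t ht v
    rw [Fin.sum_univ_eq_sum_range (fun j => if j < φd ∧ j % m = t then v else 0) (φd + m)]
    rw [← Finset.sum_subset (Finset.range_subset_range.mpr (Nat.le_add_right φd m))
      (fun x _ hx => by rw [Finset.mem_range, not_lt] at hx; rw [if_neg (by omega)])]
    have : ∀ j ∈ Finset.range φd,
        (if j < φd ∧ j % m = t then v else 0) = (if j % m = t then v else 0) := by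
      intro j hj
      rw [Finset.mem_range] at hj
      by_cases h : j % m = t
      · rw [if_pos ⟨hj, h⟩, if_pos h]
      · rw [if_neg (by tauto), if_neg h]
    rw [Finset.sum_congr rfl this, hφ, sum_strided m t ht v p']
  have hAU : A * U = M := by
    ext r c
    rw [Matrix.mul_apply]
    have hsplit : ∀ j : Fin (φd + m), A r j * U j c
        = (if (j : ℕ) = (c : ℕ) then A r j else 0)
          + (if φd ≤ (c : ℕ) ∧ (j : ℕ) < φd ∧ (j : ℕ) % m = (c : ℕ) % m then A r j else 0) := by
      intro j
      show A r j * (if (j : ℕ) = (c : ℕ) then (1 : ℤ)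
        else if φd ≤ (c : ℕ) ∧ (j : ℕ) < φd ∧ (j : ℕ) % m = (c : ℕ) % m then 1 else 0) = _
      by_cases h1 : (j : ℕ) = (c : ℕ)
      · rw [if_pos h1, if_pos h1, mul_one, if_neg (by omega), add_zero]
      · rw [if_neg h1, if_neg h1, zero_add]
        by_cases h2 : φd ≤ (c : ℕ) ∧ (j : ℕ) < φd ∧ (j : ℕ) % m = (c : ℕ) % m
        · rw [if_pos h2, if_pos h2, mul_one]
        · rw [if_neg h2, if_neg h2, mul_zero]
    rw [Finset.sum_congr rfl fun j _ => hsplit j, Finset.sum_add_distrib]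
    have hfirst : (∑ j : Fin (φd + m), if (j : ℕ) = (c : ℕ) then A r j else 0) = A r c := by
      rw [Finset.sum_eq_single c (fun j _ hj => if_neg (fun h => hj (Fin.ext h)))
        (fun h => absurd (Finset.mem_univ c) h), if_pos rfl]
    rw [hfirst]
    by_cases hc : (c : ℕ) < φd
    · rw [Finset.sum_eq_zero (fun j _ => if_neg (fun h => absurd h.1 (by omega))), add_zero]
      show A r c = (if (c : ℕ) < φd then A r c else _)
      rw [if_pos hc]
    · push_neg at hc
      by_cases hr : (r : ℕ) < m
      · have hsum2 : (∑ j : Fin (φd + m),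
            if φd ≤ (c : ℕ) ∧ (j : ℕ) < φd ∧ (j : ℕ) % m = (c : ℕ) % m then A r j else 0)
            = p' * B ⟨(r : ℕ) % m, Nat.mod_lt _ hm⟩ ⟨(c : ℕ) % m, Nat.mod_lt _ hm⟩ := by
          have heach : ∀ j : Fin (φd + m),
              (if φd ≤ (c : ℕ) ∧ (j : ℕ) < φd ∧ (j : ℕ) % m = (c : ℕ) % m then A r j else 0)
              = (if (j : ℕ) < φd ∧ (j : ℕ) % m = (c : ℕ) % m then
                  B ⟨(r : ℕ) % m, Nat.mod_lt _ hm⟩ ⟨(c : ℕ) % m, Nat.mod_lt _ hm⟩ else 0) := by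
            intro j
            by_cases h2 : (j : ℕ) < φd ∧ (j : ℕ) % m = (c : ℕ) % m
            · rw [if_pos ⟨hc, h2.1, h2.2⟩, if_pos h2, hA1 r j hr]
              exact congrArg _ (Fin.ext h2.2)
            · rw [if_neg (by tauto), if_neg h2]
          rw [Finset.sum_congr rfl fun j _ => heach j,
            hcount ((c : ℕ) % m) (Nat.mod_lt _ hm) _]
        rw [hsum2, hA1 r c hr]
        show _ = (if (c : ℕ) < φd then A r c else if (r : ℕ) < m then _ else _)
        rw [if_neg (by omega), if_pos hr]
        have hcm : (c : ℕ) % m = ((c : ℕ) - φd) % m := by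
          have h5 : (c : ℕ) = ((c : ℕ) - φd) + p' * m := by omega
          conv_lhs => rw [h5]
          rw [Nat.add_mul_mod_self_right]
        have hBeq : B ⟨(r : ℕ) % m, Nat.mod_lt _ hm⟩ ⟨((c : ℕ) - φd) % m, Nat.mod_lt _ hm⟩
            = B ⟨(r : ℕ) % m, Nat.mod_lt _ hm⟩ ⟨(c : ℕ) % m, Nat.mod_lt _ hm⟩ :=
          congrArg _ (Fin.ext hcm.symm)
        rw [hBeq]
        push_cast
        ring
      · push_neg at hr
        have hrφ : (r : ℕ) - m < φd := by have := r.isLt; omega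
        have heach : ∀ j : Fin (φd + m),
            (if φd ≤ (c : ℕ) ∧ (j : ℕ) < φd ∧ (j : ℕ) % m = (c : ℕ) % m then A r j else 0)
            = (if (j : ℕ) = (r : ℕ) - m ∧ ((r : ℕ) - m) % m = (c : ℕ) % m then 1 else 0) := by
          intro j
          by_cases hcond : φd ≤ (c : ℕ) ∧ (j : ℕ) < φd ∧ (j : ℕ) % m = (c : ℕ) % m
          · rw [if_pos hcond, hA2 r j hr, if_pos hcond.2.1]
            by_cases h2 : (r : ℕ) - m = (j : ℕ)
            · rw [if_pos h2, if_pos ⟨h2.symm, by rw [h2]; exact hcond.2.2⟩]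
            · rw [if_neg h2, if_neg (fun hh => h2 hh.1.symm)]
          · rw [if_neg hcond, if_neg]
            rintro ⟨hh1, hh2⟩
            exact hcond ⟨hc, by omega, by rw [hh1, hh2]⟩
        rw [Finset.sum_congr rfl fun j _ => heach j]
        have hsum2 : (∑ j : Fin (φd + m),
            if (j : ℕ) = (r : ℕ) - m ∧ ((r : ℕ) - m) % m = (c : ℕ) % m then (1 : ℤ) else 0)
            = if ((r : ℕ) - m) % m = (c : ℕ) % m then 1 else 0 := by
          by_cases hQ : ((r : ℕ) - m) % m = (c : ℕ) % m
          · rw [if_pos hQ]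
            rw [Finset.sum_eq_single (⟨(r : ℕ) - m, by omega⟩ : Fin (φd + m))]
            · rw [if_pos ⟨rfl, hQ⟩]
            · intro j _ hj
              rw [if_neg]
              rintro ⟨hh1, -⟩
              exact hj (Fin.ext hh1)
            · intro h; exact absurd (Finset.mem_univ _) h
          · rw [if_neg hQ, Finset.sum_eq_zero (fun j _ => if_neg (by tauto))]
        rw [hsum2, hA2 r c hr]
        show _ = (if (c : ℕ) < φd then A r c else if (r : ℕ) < m then _ else _)
        have h₁ : ¬((c : ℕ) < φd) := by omega
        have h₂ : ¬((r : ℕ) < m) := by omega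
        rw [if_neg h₁, if_neg h₁, if_neg h₂]
        by_cases hQ : ((r : ℕ) - m) % m = (c : ℕ) % m
        · rw [if_pos hQ, if_pos hQ]; ring
        · rw [if_neg hQ, if_neg hQ]; ring
  -- determinant chain
  have hdetAM : A.det = M.det := by
    rw [← hAU, Matrix.det_mul, hdetU, mul_one]
  set σ : Equiv.Perm (Fin (φd + m)) := Equiv.addRight ((m : Fin (φd + m))) with hσ
  have hσval : ∀ x : Fin (φd + m), ((σ x : Fin (φd + m)) : ℕ) = ((x : ℕ) + m) % (φd + m) := by
    intro x
    show ((x + (m : Fin (φd + m)) : Fin (φd + m)) : ℕ) = _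
    rw [Fin.add_def]
    congr 1
    rw [Fin.val_cast_of_lt (by omega)]
  have hblocks : (M.submatrix σ id).submatrix (finSumFinEquiv (m := φd) (n := m))
        (finSumFinEquiv (m := φd) (n := m))
      = Matrix.fromBlocks 1 0
          (Matrix.of fun i j => (M.submatrix σ id) (finSumFinEquiv (Sum.inr i))
            (finSumFinEquiv (Sum.inl j)))
          (((p' + 1 : ℕ) : ℤ) • B) := by
    ext rr cc
    cases rr with
    | inl i =>
      have hrval : ((σ (finSumFinEquiv (Sum.inl i)) : Fin (φd + m)) : ℕ) = (i : ℕ) + m := by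
        rw [hσval]
        simp only [finSumFinEquiv_apply_left, Fin.coe_castAdd]
        rw [Nat.mod_eq_of_lt (by omega)]
      cases cc with
      | inl j =>
        show M (σ (finSumFinEquiv (Sum.inl i))) (finSumFinEquiv (Sum.inl j)) = (1 : Matrix (Fin φd) (Fin φd) ℤ) i j
        have hcval : ((finSumFinEquiv (Sum.inl j) : Fin (φd + m)) : ℕ) = (j : ℕ) := by
          simp only [finSumFinEquiv_apply_left, Fin.coe_castAdd]
        show (if ((finSumFinEquiv (Sum.inl j) : Fin (φd + m)) : ℕ) < φd
            then A (σ (finSumFinEquiv (Sum.inl i))) (finSumFinEquiv (Sum.inl j)) else _) = _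
        rw [if_pos (by rw [hcval]; exact j.isLt), hA2 _ _ (by rw [hrval]; omega), hcval,
          if_pos j.isLt, hrval, Matrix.one_apply]
        have : (i : ℕ) + m - m = (i : ℕ) := by omega
        rw [this]
        by_cases hij : i = j
        · rw [if_pos (by rw [hij]), if_pos hij]
        · rw [if_neg (fun h => hij (Fin.ext h)), if_neg hij]
      | inr j =>
        show M (σ (finSumFinEquiv (Sum.inl i))) (finSumFinEquiv (Sum.inr j)) = (0 : Matrix (Fin φd) (Fin m) ℤ) i j
        have hcval : ((finSumFinEquiv (Sum.inr j) : Fin (φd + m)) : ℕ) = φd + (j : ℕ) := by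
          simp only [finSumFinEquiv_apply_right, Fin.coe_natAdd]
        show (if ((finSumFinEquiv (Sum.inr j) : Fin (φd + m)) : ℕ) < φd then _
            else if ((σ (finSumFinEquiv (Sum.inl i)) : Fin (φd + m)) : ℕ) < m then _ else (0:ℤ)) = _
        rw [if_neg (by omega), if_neg (by rw [hrval]; omega)]
        rfl
    | inr i =>
      cases cc with
      | inl j => rfl
      | inr j =>
        have hrval : ((σ (finSumFinEquiv (Sum.inr i)) : Fin (φd + m)) : ℕ) = (i : ℕ) := by
          rw [hσval]
          simp only [finSumFinEquiv_apply_right, Fin.coe_natAdd]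
          have : φd + (i : ℕ) + m = (i : ℕ) + (φd + m) := by ring
          rw [this, Nat.add_mod_right, Nat.mod_eq_of_lt (by omega)]
        have hcval : ((finSumFinEquiv (Sum.inr j) : Fin (φd + m)) : ℕ) = φd + (j : ℕ) := by
          simp only [finSumFinEquiv_apply_right, Fin.coe_natAdd]
        show M (σ (finSumFinEquiv (Sum.inr i))) (finSumFinEquiv (Sum.inr j))
          = (((p' + 1 : ℕ) : ℤ) • B) i j
        show (if ((finSumFinEquiv (Sum.inr j) : Fin (φd + m)) : ℕ) < φd then _
            else if ((σ (finSumFinEquiv (Sum.inr i)) : Fin (φd + m)) : ℕ) < m then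
              ((p' + 1 : ℕ) : ℤ) * B ⟨((σ (finSumFinEquiv (Sum.inr i)) : Fin (φd + m)) : ℕ) % m, _⟩
                ⟨(((finSumFinEquiv (Sum.inr j) : Fin (φd + m)) : ℕ) - φd) % m, _⟩ else (0:ℤ)) = _
        rw [if_neg (by rw [hcval]; omega), if_pos (by rw [hrval]; exact i.isLt)]
        rw [Matrix.smul_apply, smul_eq_mul]
        have e1 : (⟨((σ (finSumFinEquiv (Sum.inr i)) : Fin (φd + m)) : ℕ) % m,
            Nat.mod_lt _ hm⟩ : Fin m) = i :=
          Fin.ext (by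
            show ((σ (finSumFinEquiv (Sum.inr i)) : Fin (φd + m)) : ℕ) % m = (i : ℕ)
            rw [hrval]
            exact Nat.mod_eq_of_lt i.isLt)
        have e2 : (⟨(((finSumFinEquiv (Sum.inr j) : Fin (φd + m)) : ℕ) - φd) % m,
            Nat.mod_lt _ hm⟩ : Fin m) = j :=
          Fin.ext (by
            show (((finSumFinEquiv (Sum.inr j) : Fin (φd + m)) : ℕ) - φd) % m = (j : ℕ)
            rw [hcval, Nat.add_sub_cancel_left]
            exact Nat.mod_eq_of_lt j.isLt)
        rw [e1, e2]
  have hdetM' : (M.submatrix σ id).det = ((p' + 1 : ℕ) : ℤ) ^ m * B.det := by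
    rw [← Matrix.det_submatrix_equiv_self (finSumFinEquiv (m := φd) (n := m)), hblocks,
      Matrix.det_fromBlocks_zero₁₂, Matrix.det_one, one_mul, Matrix.det_smul]
    simp
  have hsign : ((Equiv.Perm.sign σ) : ℤ) = (-1) ^ ((φd + m - 1) * m) := by
    rw [hσ]
    exact sign_addRight_natCast m
  have hperm := Matrix.det_permute σ M
  have hs2 : ((Equiv.Perm.sign σ) : ℤ) * ((Equiv.Perm.sign σ) : ℤ) = 1 := by
    rcases Int.units_eq_one_or (Equiv.Perm.sign σ) with h | h <;> rw [h] <;> norm_num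
  calc A.det = M.det := hdetAM
    _ = (((Equiv.Perm.sign σ) : ℤ) * ((Equiv.Perm.sign σ) : ℤ)) * M.det := by rw [hs2, one_mul]
    _ = ((Equiv.Perm.sign σ) : ℤ) * (M.submatrix σ id).det := by
        rw [hperm, mul_assoc]
        push_cast
        ring
    _ = (-1) ^ ((φd + m - 1) * m) * ((p' + 1 : ℕ) : ℤ) ^ m * B.det := by
        rw [hdetM', hsign, mul_assoc]

end DetAmat

namespace DetAmat
open Finset Matrix Polynomial

lemma det_step {p : ℕ} (hp : p.Prime) (e : ℕ) :
    (Amat (p ^ (e + 1))).det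
      = (-1) ^ ((p ^ (e + 1) - 1) * p ^ e) * (p : ℤ) ^ (p ^ e) * (Amat (p ^ e)).det := by
  have hpe : 0 < p ^ e := pow_pos hp.pos e
  have hple : p ^ e ≤ p ^ (e + 1) := Nat.pow_le_pow_right hp.pos (Nat.le_succ e)
  have hφm : p ^ (e + 1) - p ^ e = (p - 1) * p ^ e := by rw [Nat.sub_mul, one_mul, ← pow_succ']
  have hplt : p ^ e < p ^ (e + 1) :=
    Nat.pow_lt_pow_right hp.one_lt (Nat.lt_succ_self e)
  have hN : (p ^ (e + 1) - p ^ e) + p ^ e = p ^ (e + 1) := by omega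
  have hA1 : ∀ r c : Fin ((p ^ (e + 1) - p ^ e) + p ^ e), (r : ℕ) < p ^ e →
      (Amat (p ^ (e + 1))).submatrix (finCongr hN) (finCongr hN) r c
        = Amat (p ^ e) ⟨(r : ℕ) % p ^ e, Nat.mod_lt _ hpe⟩ ⟨(c : ℕ) % p ^ e, Nat.mod_lt _ hpe⟩ := by
    intro r c hr
    show Amat (p ^ (e + 1)) (finCongr hN r) (finCongr hN c) = _
    rw [Amat_eq, Amat_eq]
    show ent (p ^ (e + 1)) (r : ℕ) (c : ℕ) = ent (p ^ e) ((r : ℕ) % p ^ e) ((c : ℕ) % p ^ e)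
    rw [ent_lo hp _ hr, Nat.mod_eq_of_lt hr]
  have hA2 : ∀ r c : Fin ((p ^ (e + 1) - p ^ e) + p ^ e), p ^ e ≤ (r : ℕ) →
      (Amat (p ^ (e + 1))).submatrix (finCongr hN) (finCongr hN) r c
        = if (c : ℕ) < p ^ (e + 1) - p ^ e then (if (r : ℕ) - p ^ e = (c : ℕ) then 1 else 0)
          else (if ((r : ℕ) - p ^ e) % p ^ e = (c : ℕ) % p ^ e then -1 else 0) := by
    intro r c hr
    show Amat (p ^ (e + 1)) (finCongr hN r) (finCongr hN c) = _
    rw [Amat_eq]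
    show ent (p ^ (e + 1)) (r : ℕ) (c : ℕ) = _
    rw [ent_hi hp hr (by have := r.isLt; omega) (by have := c.isLt; omega)]
  have hstruct := det_structure hpe (by have := hp.two_le; omega : 0 < p - 1) hφm
    (Amat (p ^ e)) ((Amat (p ^ (e + 1))).submatrix (finCongr hN) (finCongr hN)) hA1 hA2
  rw [Matrix.det_submatrix_equiv_self] at hstruct
  rw [hstruct]
  have h1 : (p ^ (e + 1) - p ^ e) + p ^ e - 1 = p ^ (e + 1) - 1 := by omega
  have h2 : p - 1 + 1 = p := by have := hp.one_le; omega
  rw [h1, h2]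

end DetAmat

namespace DetAmat
open Finset Matrix Polynomial

lemma det_Amat_one : (Amat 1).det = 1 := by
  rw [Matrix.det_fin_one, Amat_eq]
  show ent 1 0 0 = 1
  unfold ent
  rw [rowPairs_one]
  show ((X : ℤ[X]) ^ 0 %ₘ cyclotomic 1 ℤ).coeff 0 = 1
  rw [pow_zero, cyclotomic_one]
  have hmonic : (X - 1 : ℤ[X]).Monic := by simpa using monic_X_sub_C (1 : ℤ)
  have hdeg : (1 : ℤ[X]).degree < (X - 1 : ℤ[X]).degree := by
    have : (X - 1 : ℤ[X]).degree = 1 := by simpa using degree_X_sub_C (1 : ℤ)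
    rw [this, Polynomial.degree_one]
    norm_num
  rw [(Polynomial.modByMonic_eq_self_iff hmonic).mpr hdeg]
  simp

lemma neg_one_pow_congr {a b : ℕ} (h : a % 2 = b % 2) : ((-1 : ℤ)) ^ a = (-1) ^ b := by
  rcases Nat.even_or_odd a with ha | ha
  · rw [ha.neg_one_pow, (Nat.even_iff.mpr (by rw [Nat.even_iff] at ha; omega)).neg_one_pow]
  · rw [ha.neg_one_pow, (Nat.odd_iff.mpr (by rw [Nat.odd_iff] at ha; omega)).neg_one_pow]

lemma det_Amat_pp {p : ℕ} (hp : p.Prime) (e : ℕ) :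
    (Amat (p ^ e)).det = (-1) ^ (p ^ e - 1) * (p : ℤ) ^ (∑ i ∈ Finset.range e, p ^ i) := by
  induction e with
  | zero =>
    rw [pow_zero]
    rw [det_Amat_one]
    simp
  | succ e ih =>
    rw [det_step hp e, ih, Finset.sum_range_succ]
    have hsign : ((-1 : ℤ)) ^ ((p ^ (e + 1) - 1) * p ^ e) * (-1) ^ (p ^ e - 1)
        = (-1) ^ (p ^ (e + 1) - 1) := by
      rw [← pow_add]
      apply neg_one_pow_congr
      have hpe : 0 < p ^ e := pow_pos hp.pos e
      have hpe1 : 0 < p ^ (e + 1) := pow_pos hp.pos (e + 1)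
      rcases hp.eq_two_or_odd' with h2 | hodd
      · subst h2
        rcases Nat.eq_zero_or_pos e with he | he
        · subst he; norm_num
        · have h2e : (2 : ℕ) ^ e % 2 = 0 :=
            Nat.even_iff.mp (Nat.even_pow.mpr ⟨even_two, by omega⟩)
          have h2e1 : (2 : ℕ) ^ (e + 1) % 2 = 0 :=
            Nat.even_iff.mp (Nat.even_pow.mpr ⟨even_two, by omega⟩)
          have hC : ((2 ^ (e + 1) - 1) * 2 ^ e) % 2 = 0 :=
            Nat.even_iff.mp ((Nat.even_iff.mpr h2e).mul_left _)
          omega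
      · have h1 : Odd (p ^ e) := Odd.pow hodd
        have h2 : Odd (p ^ (e + 1)) := Odd.pow hodd
        rw [Nat.odd_iff] at h1 h2
        have hC : ((p ^ (e + 1) - 1) * p ^ e) % 2 = 0 :=
          Nat.even_iff.mp ((Nat.even_iff.mpr (by omega : (p ^ (e + 1) - 1) % 2 = 0)).mul_right _)
        omega
    calc (-1 : ℤ) ^ ((p ^ (e + 1) - 1) * p ^ e) * (p : ℤ) ^ (p ^ e)
          * ((-1) ^ (p ^ e - 1) * (p : ℤ) ^ (∑ i ∈ Finset.range e, p ^ i))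
        = ((-1 : ℤ) ^ ((p ^ (e + 1) - 1) * p ^ e) * (-1) ^ (p ^ e - 1))
          * (((p : ℤ) ^ (∑ i ∈ Finset.range e, p ^ i)) * ((p : ℤ) ^ (p ^ e))) := by ring
      _ = (-1) ^ (p ^ (e + 1) - 1)
          * (((p : ℤ) ^ (∑ i ∈ Finset.range e, p ^ i)) * ((p : ℤ) ^ (p ^ e))) := by rw [hsign]
      _ = _ := by rw [pow_add (p : ℤ) (∑ i ∈ Finset.range e, p ^ i) (p ^ e)]

lemma geom_div {p : ℕ} (hp : p.Prime) (e : ℕ) :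
    (p ^ e - 1) / (p - 1) = ∑ i ∈ Finset.range e, p ^ i := by
  have h2 := hp.two_le
  apply Nat.div_eq_of_eq_mul_left (by omega)
  have hpe : 1 ≤ p ^ e := Nat.one_le_pow _ _ hp.pos
  zify [hpe, (by omega : 1 ≤ p)]
  exact (geom_sum_mul (p : ℤ) e).symm

end DetAmat

theorem det_Amat_prime_pow (p e : ℕ) (hp : p.Prime) (he : 1 ≤ e) :
    (Amat (p ^ e)).det = (-1) ^ (p ^ e - 1) * (p : ℤ) ^ ((p ^ e - 1) / (p - 1)) := by
  rw [DetAmat.det_Amat_pp hp e, DetAmat.geom_div hp e]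
end

section
/- If h is a multiplicative arithmetic function and g(n; h) := ∏_{k=1}^{n} h(gcd(k, n)), then for coprime positive integers m and n one has g(mn; h) = g(m; h)^n · g(n; h)^m. -/
private lemma gcd_mul_of_coprime {m n : ℕ} (hmn : Nat.Coprime m n) (k : ℕ) :
    Nat.gcd k (m * n) = Nat.gcd k m * Nat.gcd k n := by
  apply Nat.dvd_antisymm
  · have h1 : Nat.gcd k (m * n) ∣ Nat.gcd (Nat.gcd k (m * n)) m * Nat.gcd (Nat.gcd k (m * n)) n :=
      Nat.dvd_gcd_mul_gcd_iff_dvd_mul.mpr (Nat.gcd_dvd_right _ _)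
    exact h1.trans (Nat.mul_dvd_mul
      (Nat.dvd_gcd ((Nat.gcd_dvd_left _ _).trans (Nat.gcd_dvd_left k (m*n))) (Nat.gcd_dvd_right _ _))
      (Nat.dvd_gcd ((Nat.gcd_dvd_left _ _).trans (Nat.gcd_dvd_left k (m*n))) (Nat.gcd_dvd_right _ _)))
  · have hcop : Nat.Coprime (Nat.gcd k m) (Nat.gcd k n) :=
      Nat.Coprime.coprime_dvd_left (Nat.gcd_dvd_right k m)
        (Nat.Coprime.coprime_dvd_right (Nat.gcd_dvd_right k n) hmn)
    exact Nat.dvd_gcd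
      (hcop.mul_dvd_of_dvd_of_dvd (Nat.gcd_dvd_left _ _) (Nat.gcd_dvd_left _ _))
      (Nat.mul_dvd_mul (Nat.gcd_dvd_right _ _) (Nat.gcd_dvd_right _ _))

private lemma periodic_prod {M : Type*} [CommMonoid M] (F : ℕ → M) (m : ℕ)
    (hF : ∀ k, F (k + m) = F k) (n : ℕ) :
    ∏ k ∈ Finset.range (m * n), F k = (∏ k ∈ Finset.range m, F k) ^ n := by
  have key : ∀ q r, F (m * q + r) = F r := by
    intro q
    induction q with
    | zero => simp
    | succ q ih =>
      intro r
      have : m * (q + 1) + r = (m * q + r) + m := by ring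
      rw [this, hF, ih]
  induction n with
  | zero => simp
  | succ n ih =>
    rw [Nat.mul_succ, Finset.prod_range_add, ih, pow_succ]
    congr 1
    exact Finset.prod_congr rfl fun r _ => key n r

private lemma Icc_to_range {M : Type*} [CommMonoid M] (F : ℕ → M) (N : ℕ) (hN : 0 < N)
    (hF : F N = F 0) :
    ∏ k ∈ Finset.Icc 1 N, F k = ∏ k ∈ Finset.range N, F k := by
  apply Finset.prod_nbij' (fun k => k % N) (fun k => if k = 0 then N else k)
  · intro k hk
    simp only [Finset.mem_Icc] at hk
    exact Finset.mem_range.mpr (Nat.mod_lt _ hN)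
  · intro k hk
    simp only [Finset.mem_range] at hk
    by_cases h : k = 0
    · simp only [h, reduceIte, Finset.mem_Icc]; omega
    · simp [h, Finset.mem_Icc, Nat.one_le_iff_ne_zero.mpr h, hk.le]
  · intro k hk
    simp only [Finset.mem_Icc] at hk
    rcases eq_or_lt_of_le hk.2 with h | h
    · simp [h]
    · rw [Nat.mod_eq_of_lt h]
      simp [Nat.one_le_iff_ne_zero.mp hk.1]
  · intro k hk
    simp only [Finset.mem_range] at hk
    by_cases h : k = 0
    · simp [h]
    · simp [h, Nat.mod_eq_of_lt hk]
  · intro k hk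
    simp only [Finset.mem_Icc] at hk
    rcases eq_or_lt_of_le hk.2 with h | h
    · rw [h, Nat.mod_self, ← h, h, hF]
    · rw [Nat.mod_eq_of_lt h]

/-- For a multiplicative function `h` and `g(n; h) = ∏_{k=1}^n h(gcd(k,n))`, one has
`g(mn; h) = g(m; h)^n · g(n; h)^m` for coprime `m`, `n`. -/
theorem gcd_prod_multiplicative {M : Type*} [CommMonoid M] (h : ℕ → M)
    (hmul : ∀ a b : ℕ, Nat.Coprime a b → h (a * b) = h a * h b)
    (m n : ℕ) (hm : 0 < m) (hn : 0 < n) (hmn : Nat.Coprime m n) :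
    ∏ k ∈ Finset.Icc 1 (m * n), h (Nat.gcd k (m * n)) =
      (∏ k ∈ Finset.Icc 1 m, h (Nat.gcd k m)) ^ n *
        (∏ k ∈ Finset.Icc 1 n, h (Nat.gcd k n)) ^ m := by
  have hmn0 : 0 < m * n := Nat.mul_pos hm hn
  rw [Icc_to_range _ _ hmn0 (by simp [Nat.gcd_self]),
      Icc_to_range _ _ hm (by simp [Nat.gcd_self]),
      Icc_to_range _ _ hn (by simp [Nat.gcd_self])]
  have split : ∀ k, h (Nat.gcd k (m * n)) = h (Nat.gcd k m) * h (Nat.gcd k n) := by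
    intro k
    rw [gcd_mul_of_coprime hmn k]
    exact hmul _ _ (Nat.Coprime.coprime_dvd_left (Nat.gcd_dvd_right k m)
      (Nat.Coprime.coprime_dvd_right (Nat.gcd_dvd_right k n) hmn))
  calc ∏ k ∈ Finset.range (m * n), h (Nat.gcd k (m * n))
      = ∏ k ∈ Finset.range (m * n), (h (Nat.gcd k m) * h (Nat.gcd k n)) :=
        Finset.prod_congr rfl fun k _ => split k
    _ = (∏ k ∈ Finset.range (m * n), h (Nat.gcd k m)) *
          ∏ k ∈ Finset.range (m * n), h (Nat.gcd k n) := Finset.prod_mul_distrib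
    _ = (∏ k ∈ Finset.range m, h (Nat.gcd k m)) ^ n *
          (∏ k ∈ Finset.range n, h (Nat.gcd k n)) ^ m := by
        rw [periodic_prod (fun k => h (Nat.gcd k m)) m (fun k => by simp) n]
        rw [mul_comm m n, periodic_prod (fun k => h (Nat.gcd k n)) n (fun k => by simp) m]
end

section
/- Let n have smallest prime divisor p_1. The multiplicity of 1 among the elementary divisors of A_n is n − n/p_1; equivalently, the minimal number of generators of the cokernel G(n) of Ψ_n is n/p_1. -/
open Polynomial

lemma rowPairs_length (n : ℕ) : (rowPairs n).length = n := by
  rw [rowPairs, List.length_flatMap]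
  have h1 : (List.map (List.length ∘ fun d => List.map (fun i => (d, i)) (List.range d.totient))
        (Finset.sort n.divisors (fun x1 x2 => x1 ≤ x2))).sum
      = (List.map Nat.totient (Finset.sort n.divisors (fun x1 x2 => x1 ≤ x2))).sum := by
    congr 1; apply List.map_congr_left; intro d _; simp
  refine Eq.trans h1 ?_
  have h2 := (Finset.sort_perm_toList n.divisors (fun x1 x2 => x1 ≤ x2)).map Nat.totient
  rw [h2.sum_eq, Finset.sum_map_toList]
  exact Nat.sum_totient n

lemma mem_rowPairs {n d i : ℕ} : (d, i) ∈ rowPairs n ↔ d ∈ n.divisors ∧ i < d.totient := by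
  simp [rowPairs]



/-- polynomial from coefficient vector -/
noncomputable def polyOf {R : Type*} [CommRing R] {k : ℕ} (v : Fin k → R) : R[X] :=
  ∑ c : Fin k, C (v c) * X ^ (c : ℕ)

lemma polyOf_coeff {R : Type*} [CommRing R] {k : ℕ} (v : Fin k → R) (j : ℕ) :
    (polyOf v).coeff j = if h : j < k then v ⟨j, h⟩ else 0 := by
  rw [polyOf, finset_sum_coeff]
  simp only [coeff_C_mul, coeff_X_pow]
  split_ifs with h
  · rw [Finset.sum_eq_single (⟨j, h⟩ : Fin k)]
    · simp
    · intro b _ hb; simp [Fin.ext_iff] at hb ⊢; intro hbj; exact absurd hbj.symm hb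
    · simp
  · apply Finset.sum_eq_zero; intro c _
    have : j ≠ (c : ℕ) := by omega
    simp [this]

lemma polyOf_degree_lt {R : Type*} [CommRing R] [Nontrivial R] {k : ℕ} (v : Fin k → R) :
    (polyOf v).degree < (k : WithBot ℕ) := by
  rw [degree_lt_iff_coeff_zero]
  intro m hm
  rw [polyOf_coeff]
  have : ¬ m < k := by exact_mod_cast not_lt.mpr hm
  simp [this]

lemma polyOf_coeff_self {R : Type*} [CommRing R] {k : ℕ} {h : R[X]} (hd : h.degree < (k : WithBot ℕ)) :
    polyOf (fun c : Fin k => h.coeff c) = h := by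
  rw [polyOf]
  exact (sum_fin (fun i c => C c * X ^ i) (by simp) hd).trans (sum_C_mul_X_pow_eq h)

lemma coeff_polyOf_modByMonic {R : Type*} [CommRing R] {k : ℕ} (v : Fin k → R) (q : R[X]) (i : ℕ) :
    (polyOf v %ₘ q).coeff i = ∑ c : Fin k, ((X : R[X]) ^ (c : ℕ) %ₘ q).coeff i * v c := by
  have h1 : polyOf v %ₘ q = ∑ c : Fin k, v c • ((X : R[X]) ^ (c : ℕ) %ₘ q) := by
    have : polyOf v = ∑ c : Fin k, v c • ((X : R[X]) ^ (c : ℕ)) := by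
      simp [polyOf, smul_eq_C_mul]
    show modByMonicHom q (polyOf v) = _
    rw [this, map_sum]
    simp [modByMonicHom]
  rw [h1, finset_sum_coeff]
  simp [mul_comm]

noncomputable def polyOfL (R : Type*) [CommRing R] (k : ℕ) : (Fin k → R) →ₗ[R] R[X] where
  toFun := polyOf
  map_add' v w := by simp [polyOf, Finset.sum_add_distrib, add_mul, C_add]
  map_smul' a v := by
    simp [polyOf, Finset.smul_sum, smul_eq_C_mul, mul_assoc, C_mul]

noncomputable def mulCoeffL (R : Type*) [CommRing R] (g : R[X]) (k n : ℕ) :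
    (Fin k → R) →ₗ[R] (Fin n → R) :=
  LinearMap.pi fun c : Fin n =>
    (lcoeff R (c : ℕ)).comp ((LinearMap.mulLeft R g).comp (polyOfL R k))

lemma mulCoeffL_apply {R : Type*} [CommRing R] (g : R[X]) {k n : ℕ} (w : Fin k → R) (c : Fin n) :
    mulCoeffL R g k n w c = (g * polyOf w).coeff c := rfl

lemma rank_Amat_map (n : ℕ) (p : ℕ) [Fact p.Prime] (g : (ZMod p)[X])
    (hg : g.Monic) (hdeg : g.natDegree ≤ n)
    (hiff : ∀ f : (ZMod p)[X], (∀ d ∈ n.divisors, cyclotomic d (ZMod p) ∣ f) ↔ g ∣ f) :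
    ((Amat n).map (Int.cast : ℤ → ZMod p)).rank = g.natDegree := by
  set K := ZMod p with hK
  set B := (Amat n).map (Int.cast : ℤ → K) with hBdef
  set t := g.natDegree with ht
  have hg0 : g ≠ 0 := hg.ne_zero
  -- entry formula
  have hent : ∀ r c : Fin n, B r c =
      (((X : K[X]) ^ (c : ℕ)) %ₘ cyclotomic ((rowPairs n).getD (r : ℕ) (1, 0)).1 K).coeff
        ((rowPairs n).getD (r : ℕ) (1, 0)).2 := by
    intro r c
    have h0 : B r c = (Int.castRingHom K) (Amat n r c) := rfl
    rw [h0]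
    show (Int.castRingHom K) ((((X : ℤ[X]) ^ (c : ℕ)) %ₘ cyclotomic _ ℤ).coeff _) = _
    rw [← coeff_map, map_modByMonic _ (cyclotomic.monic _ ℤ), Polynomial.map_pow, map_X,
      map_cyclotomic_int]
  -- kernel characterization
  have hker : ∀ v : Fin n → K, B.mulVec v = 0 ↔ g ∣ polyOf v := by
    intro v
    rw [← hiff]
    constructor
    · intro h d hd
      have hrem : polyOf v %ₘ cyclotomic d K = 0 := by
        have hdeglt : (polyOf v %ₘ cyclotomic d K).degree < (d.totient : WithBot ℕ) := by
          have := degree_modByMonic_lt (polyOf v) (cyclotomic.monic d K)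
          rwa [degree_eq_natDegree (cyclotomic_ne_zero d K), natDegree_cyclotomic] at this
        ext i
        rcases lt_or_ge i d.totient with hi | hi
        · have hmem : (d, i) ∈ rowPairs n := mem_rowPairs.mpr ⟨hd, hi⟩
          obtain ⟨j, hj, hget⟩ := List.getElem_of_mem hmem
          rw [rowPairs_length] at hj
          have hrow := congrFun h ⟨j, hj⟩
          rw [Matrix.mulVec, dotProduct] at hrow
          simp only [hent] at hrow
          rw [List.getD_eq_getElem _ _ (by rw [rowPairs_length]; exact hj)] at hrow
          simp only [hget] at hrow
          rw [coeff_polyOf_modByMonic, coeff_zero]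
          exact hrow
        · rw [coeff_zero]
          exact coeff_eq_zero_of_degree_lt
            (hdeglt.trans_le (by exact_mod_cast WithBot.coe_le_coe.mpr hi))
      rwa [modByMonic_eq_zero_iff_dvd (cyclotomic.monic d K)] at hrem
    · intro h
      funext r
      have hr : (r : ℕ) < (rowPairs n).length := by rw [rowPairs_length]; exact r.2
      have hmem : (rowPairs n).getD (r : ℕ) (1, 0) ∈ rowPairs n := by
        rw [List.getD_eq_getElem _ _ hr]; exact List.getElem_mem hr
      set q := (rowPairs n).getD (r : ℕ) (1, 0) with hq
      have hmem' : q.1 ∈ n.divisors ∧ q.2 < q.1.totient := mem_rowPairs.mp hmem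
      have hrem : polyOf v %ₘ cyclotomic q.1 K = 0 := by
        rw [modByMonic_eq_zero_iff_dvd (cyclotomic.monic _ K)]
        exact h q.1 hmem'.1
      show (B.mulVec v) r = 0
      rw [Matrix.mulVec, dotProduct]
      simp only [hent]
      rw [← coeff_polyOf_modByMonic, hrem, coeff_zero]
  -- kernel = range of mulCoeffL
  have hrange : LinearMap.range (mulCoeffL K g (n - t) n) = LinearMap.ker B.mulVecLin := by
    ext v
    constructor
    · rintro ⟨w, rfl⟩
      rw [LinearMap.mem_ker, Matrix.mulVecLin_apply, hker]
      have hdlt : (g * polyOf w).degree < (n : WithBot ℕ) := by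
        rcases eq_or_ne (polyOf w) 0 with h0 | h0
        · rw [h0, mul_zero, degree_zero]; exact WithBot.bot_lt_coe n
        · rw [degree_mul, degree_eq_natDegree hg0, degree_eq_natDegree h0]
          have h1 : (polyOf w).natDegree < n - t := by
            have := polyOf_degree_lt w (k := n - t) (R := K)
            rw [degree_eq_natDegree h0] at this
            exact_mod_cast this
          exact_mod_cast (by push_cast; exact_mod_cast (by omega : t + (polyOf w).natDegree < n) :
            ((g.natDegree : WithBot ℕ) + ((polyOf w).natDegree : WithBot ℕ) < (n : WithBot ℕ)))
      have hfun : (fun c : Fin n => (g * polyOf w).coeff c) = mulCoeffL K g (n - t) n w := by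
        funext c; rw [mulCoeffL_apply]
      have : polyOf (mulCoeffL K g (n - t) n w) = g * polyOf w := by
        rw [← hfun]; exact polyOf_coeff_self hdlt
      rw [this]
      exact Dvd.intro _ rfl
    · intro hv
      rw [LinearMap.mem_ker, Matrix.mulVecLin_apply, hker] at hv
      obtain ⟨q, hqv⟩ := hv
      have hq_deg : q.degree < ((n - t : ℕ) : WithBot ℕ) := by
        rcases eq_or_ne q 0 with h0 | h0
        · rw [h0, degree_zero]; exact WithBot.bot_lt_coe _
        · have hpv0 : polyOf v ≠ 0 := by rw [hqv]; exact mul_ne_zero hg0 h0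
          have h1 : (polyOf v).natDegree < n := by
            have := polyOf_degree_lt v (k := n) (R := K)
            rw [degree_eq_natDegree hpv0] at this
            exact_mod_cast this
          have h2 : (polyOf v).natDegree = t + q.natDegree := by
            rw [hqv, natDegree_mul hg0 h0]
          rw [degree_eq_natDegree h0]
          exact_mod_cast (by omega : q.natDegree < n - t)
      refine ⟨fun j : Fin (n - t) => q.coeff j, ?_⟩
      funext c
      rw [mulCoeffL_apply, polyOf_coeff_self hq_deg, ← hqv, polyOf_coeff]
      simp [c.2]
  -- injectivity of mulCoeffL
  have hinj : Function.Injective (mulCoeffL K g (n - t) n) := by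
    rw [← LinearMap.ker_eq_bot]
    ext w
    simp only [LinearMap.mem_ker, Submodule.mem_bot]
    constructor
    · intro hw
      have hdlt : (g * polyOf w).degree < (n : WithBot ℕ) := by
        rcases eq_or_ne (polyOf w) 0 with h0 | h0
        · rw [h0, mul_zero, degree_zero]; exact WithBot.bot_lt_coe n
        · rw [degree_mul, degree_eq_natDegree hg0, degree_eq_natDegree h0]
          have h1 : (polyOf w).natDegree < n - t := by
            have := polyOf_degree_lt w (k := n - t) (R := K)
            rw [degree_eq_natDegree h0] at this
            exact_mod_cast this
          exact_mod_cast (by push_cast; exact_mod_cast (by omega : t + (polyOf w).natDegree < n) :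
            ((g.natDegree : WithBot ℕ) + ((polyOf w).natDegree : WithBot ℕ) < (n : WithBot ℕ)))
      have hz : g * polyOf w = 0 := by
        have := polyOf_coeff_self (k := n) hdlt
        rw [← this]
        have : (fun c : Fin n => (g * polyOf w).coeff c) = fun c : Fin n => (0 : K) := by
          funext c
          rw [← mulCoeffL_apply g w c, hw]
          rfl
        rw [this]
        simp [polyOf]
      have hpw : polyOf w = 0 := by
        rcases mul_eq_zero.mp hz with h | h
        · exact absurd h hg0
        · exact h
      funext j
      have := polyOf_coeff w j
      rw [hpw, coeff_zero] at this
      simp only [j.2] at this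
      simpa using this.symm
    · rintro rfl; exact map_zero _
  -- finrank computation
  have hrank := LinearMap.finrank_range_add_finrank_ker B.mulVecLin
  rw [← hrange, LinearMap.finrank_range_of_inj hinj] at hrank
  have h1 : Module.finrank K (Fin n → K) = n := by simp
  have h2 : Module.finrank K (Fin (n - t) → K) = n - t := by simp
  rw [h1, h2] at hrank
  show Module.finrank K (LinearMap.range B.mulVecLin) = t
  omega


lemma X_pow_sub_one_dvd' {R : Type*} [CommRing R] {e m : ℕ} (h : e ∣ m) :
    (X ^ e - 1 : R[X]) ∣ X ^ m - 1 := by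
  obtain ⟨s, rfl⟩ := h
  simpa [pow_mul] using sub_dvd_pow_sub_pow (X ^ e : R[X]) 1 s

lemma cyclo_coprime {p m : ℕ} [Fact p.Prime] (hm : 0 < m) (hpm : ¬ p ∣ m)
    {e e' : ℕ} (he : e ∈ m.divisors) (he' : e' ∈ m.divisors) (hne : e ≠ e') :
    IsCoprime (cyclotomic e (ZMod p)) (cyclotomic e' (ZMod p)) := by
  have hsep : (X ^ m - 1 : (ZMod p)[X]).Separable := by
    rw [X_pow_sub_one_separable_iff]
    rw [Ne, ZMod.natCast_eq_zero_iff]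
    exact hpm
  have hdvd : cyclotomic e (ZMod p) * cyclotomic e' (ZMod p) ∣ (X ^ m - 1 : (ZMod p)[X]) := by
    rw [← prod_cyclotomic_eq_X_pow_sub_one hm]
    have hsub : ({e, e'} : Finset ℕ) ⊆ m.divisors := by
      intro x hx
      rcases Finset.mem_insert.mp hx with h | h
      · exact h ▸ he
      · exact (Finset.mem_singleton.mp h) ▸ he'
    have h2 := Finset.prod_dvd_prod_of_subset ({e, e'} : Finset ℕ) m.divisors
      (fun x => cyclotomic x (ZMod p)) hsub
    rwa [Finset.prod_pair hne] at h2
  exact (hsep.of_dvd hdvd).isCoprime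

lemma hiff_not_dvd (n p : ℕ) (hn : 0 < n) [Fact p.Prime] (hpn : ¬ p ∣ n) (f : (ZMod p)[X]) :
    (∀ d ∈ n.divisors, cyclotomic d (ZMod p) ∣ f) ↔ (X ^ n - 1 : (ZMod p)[X]) ∣ f := by
  constructor
  · intro h
    rw [← prod_cyclotomic_eq_X_pow_sub_one hn]
    exact Finset.prod_dvd_of_coprime
      (fun e he e' he' hne => cyclo_coprime hn hpn he he' hne) h
  · intro h d hd
    refine dvd_trans (dvd_trans ?_ (dvd_of_eq (prod_cyclotomic_eq_X_pow_sub_one hn (ZMod p)))) h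
    exact Finset.dvd_prod_of_mem (fun i => cyclotomic i (ZMod p)) hd



lemma pow_sub_mono {p j k : ℕ} (hp : 1 ≤ p) (hjk : j ≤ k) (hj : 1 ≤ j) :
    p ^ j - p ^ (j - 1) ≤ p ^ k - p ^ (k - 1) := by
  have h1 : p ^ (j - 1) ≤ p ^ (k - 1) := Nat.pow_le_pow_right hp (by omega)
  have h2 : p ^ j = p ^ (j - 1) * p := by rw [← pow_succ]; congr 1; omega
  have h3 : p ^ k = p ^ (k - 1) * p := by rw [← pow_succ]; congr 1; omega
  have h4 : ∀ x : ℕ, x * p - x = x * (p - 1) := fun x => by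
    rw [Nat.mul_sub]; omega
  rw [h2, h3, h4, h4]
  exact Nat.mul_le_mul_right _ h1

lemma hiff_dvd (n p : ℕ) [hpf : Fact p.Prime] (hn : 0 < n) (hpn : p ∣ n) (f : (ZMod p)[X]) :
    (∀ d ∈ n.divisors, cyclotomic d (ZMod p) ∣ f) ↔
      ((X ^ (n / p ^ n.factorization p) - 1 : (ZMod p)[X]) ^
        (p ^ n.factorization p - p ^ (n.factorization p - 1))) ∣ f := by
  have hp := hpf.out
  set k := n.factorization p with hk
  set m := n / p ^ k with hmdef
  set N := p ^ k - p ^ (k - 1) with hN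
  have hk1 : 1 ≤ k := hp.factorization_pos_of_dvd hn.ne' hpn
  have hpm : ¬ p ∣ m := Nat.not_dvd_ordCompl hp hn.ne'
  have hnm : p ^ k * m = n := Nat.ordProj_mul_ordCompl_eq_self n p
  have hm0 : 0 < m := Nat.ordCompl_pos p hn.ne'
  have hN1 : 1 ≤ N := by
    have : p ^ (k - 1) < p ^ k := Nat.pow_lt_pow_right hp.one_lt (by omega)
    omega
  constructor
  · intro h
    have key : ∀ e ∈ m.divisors, cyclotomic e (ZMod p) ^ N ∣ f := by
      intro e he
      obtain ⟨hedvd, -⟩ := Nat.mem_divisors.mp he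
      have hpe : ¬ p ∣ e := fun hc => hpm (hc.trans hedvd)
      have hd : p ^ k * e ∈ n.divisors :=
        Nat.mem_divisors.mpr ⟨(mul_dvd_mul_left _ hedvd).trans hnm.dvd, hn.ne'⟩
      have := h _ hd
      rwa [cyclotomic_mul_prime_pow_eq (ZMod p) hpe hk1] at this
    have hprod : (∏ e ∈ m.divisors, cyclotomic e (ZMod p) ^ N) ∣ f := by
      apply Finset.prod_dvd_of_coprime
      · intro e he e' he' hne
        exact (cyclo_coprime hm0 hpm he he' hne).pow
      · exact key
    rwa [Finset.prod_pow, prod_cyclotomic_eq_X_pow_sub_one hm0] at hprod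
  · intro h d hd
    refine dvd_trans ?_ h
    obtain ⟨hddvd, -⟩ := Nat.mem_divisors.mp hd
    have hd0 : 0 < d := Nat.pos_of_dvd_of_pos hddvd hn
    set j := d.factorization p with hj
    set e := d / p ^ j with hedef
    have hpe : ¬ p ∣ e := Nat.not_dvd_ordCompl hp hd0.ne'
    have hdm : p ^ j * e = d := Nat.ordProj_mul_ordCompl_eq_self d p
    have hem : e ∣ m := Nat.ordCompl_dvd_ordCompl_of_dvd hddvd p
    have hjk : j ≤ k := (Nat.factorization_le_iff_dvd hd0.ne' hn.ne').mpr hddvd p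
    have hbase : cyclotomic e (ZMod p) ∣ (X ^ m - 1 : (ZMod p)[X]) :=
      (cyclotomic.dvd_X_pow_sub_one e (ZMod p)).trans (X_pow_sub_one_dvd' hem)
    rcases Nat.eq_zero_or_pos j with hj0 | hj1
    · have : d = e := by rw [← hdm, hj0]; simp
      rw [this]
      exact hbase.trans (dvd_pow_self _ (by omega))
    · have hcyc : cyclotomic d (ZMod p) = cyclotomic e (ZMod p) ^ (p ^ j - p ^ (j - 1)) := by
        rw [← hdm]
        exact cyclotomic_mul_prime_pow_eq (ZMod p) hpe hj1
      rw [hcyc]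
      exact (pow_dvd_pow_of_dvd hbase _).trans
        (pow_dvd_pow _ (pow_sub_mono hp.one_le hjk hj1))



lemma card_dvd_filter (n : ℕ) (p : ℕ) [Fact p.Prime]
    (U V : Matrix (Fin n) (Fin n) ℤ) (D : Fin n → ℕ)
    (hU : IsUnit U.det) (hV : IsUnit V.det)
    (hSNF : U * Amat n * V = Matrix.diagonal fun j => (D j : ℤ)) :
    (Finset.univ.filter fun j => p ∣ D j).card
      = n - ((Amat n).map (Int.cast : ℤ → ZMod p)).rank := by
  classical
  set f := Int.castRingHom (ZMod p) with hf
  have hmap := congrArg (fun M : Matrix (Fin n) (Fin n) ℤ => M.map f) hSNF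
  simp only [Matrix.map_mul] at hmap
  rw [Matrix.diagonal_map (by simp)] at hmap
  have hUu : IsUnit ((U.map f) : Matrix (Fin n) (Fin n) (ZMod p)).det := by
    have := f.map_det U
    rw [show f.mapMatrix U = U.map f from rfl] at this
    rw [← this]; exact hU.map f
  have hVu : IsUnit ((V.map f) : Matrix (Fin n) (Fin n) (ZMod p)).det := by
    have := f.map_det V
    rw [show f.mapMatrix V = V.map f from rfl] at this
    rw [← this]; exact hV.map f
  have hrank : ((Amat n).map (Int.cast : ℤ → ZMod p)).rank
      = (Matrix.diagonal fun j => f ((D j : ℤ))).rank := by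
    have h1 : ((Amat n).map f : Matrix (Fin n) (Fin n) (ZMod p)) =
        (Amat n).map (Int.cast : ℤ → ZMod p) := rfl
    rw [← hmap, Matrix.rank_mul_eq_left_of_isUnit_det _ _ hVu,
      Matrix.rank_mul_eq_right_of_isUnit_det _ _ hUu, h1]
  rw [hrank, Matrix.rank_diagonal]
  have hcast : ∀ j : Fin n, f ((D j : ℤ)) = (D j : ZMod p) := by intro j; simp [hf]
  have hcard : Fintype.card {i // f ((D i : ℤ)) ≠ 0}
      = (Finset.univ.filter fun j => ¬ p ∣ D j).card := by
    rw [Fintype.card_subtype]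
    congr 1
    apply Finset.filter_congr
    intro j _
    simp only [hcast, Ne, ZMod.natCast_eq_zero_iff]
  rw [hcard]
  have := Finset.card_filter_add_card_filter_not
    (s := (Finset.univ : Finset (Fin n))) (p := fun j => p ∣ D j)
  simp only [Finset.card_univ, Fintype.card_fin] at this
  omega


lemma upclosed_subset {n : ℕ} {S T : Finset (Fin n)}
    (hS : ∀ i j : Fin n, i ≤ j → i ∈ S → j ∈ S)
    (hT : ∀ i j : Fin n, i ≤ j → i ∈ T → j ∈ T)
    (hcard : S.card ≤ T.card) : S ⊆ T := by
  intro j hj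
  by_contra hjT
  have hTsub : T ⊆ Finset.Ioi j := by
    intro i hi
    rw [Finset.mem_Ioi]
    by_contra hle
    exact hjT (hT i j (not_lt.mp hle) hi)
  have hSsup : Finset.Ici j ⊆ S := fun i hi => hS j i (Finset.mem_Ici.mp hi) hj
  have h1 : (Finset.Ici j).card ≤ S.card := Finset.card_le_card hSsup
  have h2 : T.card ≤ (Finset.Ioi j).card := Finset.card_le_card hTsub
  have h3 : (Finset.Ioi j).card < (Finset.Ici j).card := by
    rw [Fin.card_Ici, Fin.card_Ioi]
    have := j.2
    omega
  omega

/-- rank over ZMod p of the reduced matrix, for p prime. -/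
lemma rank_eq (n p : ℕ) (hn : 0 < n) (hp : p.Prime) :
    haveI := Fact.mk hp
    ((Amat n).map (Int.cast : ℤ → ZMod p)).rank = if p ∣ n then n - n / p else n := by
  haveI := Fact.mk hp
  by_cases hpn : p ∣ n
  · rw [if_pos hpn]
    set k := n.factorization p with hk
    set m := n / p ^ k with hm
    set N := p ^ k - p ^ (k - 1) with hN
    have hk1 : 1 ≤ k := hp.factorization_pos_of_dvd hn.ne' hpn
    have hnm : p ^ k * m = n := Nat.ordProj_mul_ordCompl_eq_self n p
    have hm0 : 0 < m := Nat.ordCompl_pos p hn.ne'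
    have hmonic : ((X ^ m - 1 : (ZMod p)[X]) ^ N).Monic := by
      apply Monic.pow
      have := monic_X_pow_sub_C (1 : ZMod p) hm0.ne'
      rwa [map_one] at this
    have hdeg : ((X ^ m - 1 : (ZMod p)[X]) ^ N).natDegree = N * m := by
      rw [natDegree_pow]
      congr 1
      have := natDegree_X_pow_sub_C (n := m) (r := (1 : ZMod p))
      rwa [map_one] at this
    have harith : N * m = n - n / p := by
      have hdivq : n / p = p ^ (k - 1) * m := by
        have h1 : n = p * (p ^ (k - 1) * m) := by
          rw [← hnm, ← mul_assoc, ← pow_succ']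
          congr 2
          omega
        rw [h1, Nat.mul_div_cancel_left _ hp.pos]
      rw [hdivq, hN, ← hnm, Nat.sub_mul]
    have := rank_Amat_map n p ((X ^ m - 1 : (ZMod p)[X]) ^ N) hmonic
      (by rw [hdeg, harith]; exact Nat.sub_le _ _) (hiff_dvd n p hn hpn)
    rw [this, hdeg, harith]
  · rw [if_neg hpn]
    have hmonic : (X ^ n - 1 : (ZMod p)[X]).Monic := by
      have := monic_X_pow_sub_C (1 : ZMod p) hn.ne'
      rwa [map_one] at this
    have hdeg : (X ^ n - 1 : (ZMod p)[X]).natDegree = n := by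
      have := natDegree_X_pow_sub_C (n := n) (r := (1 : ZMod p))
      rwa [map_one] at this
    have := rank_Amat_map n p (X ^ n - 1 : (ZMod p)[X]) hmonic (by omega)
      (hiff_not_dvd n p hn hpn)
    rw [this, hdeg]

/-- The multiplicity of `1` among the elementary divisors of `Aₙ` is `n − n/p₁`,
where `p₁` is the least prime divisor of `n`: in any Smith normal form
`U · Aₙ · V = diag(D)` with nonnegative entries `D` in divisibility order, exactly
`n − n/p₁` of the entries equal `1`. -/
theorem multiplicity_one_elementary_divisors (n : ℕ) (hn : 1 < n)
    (U V : Matrix (Fin n) (Fin n) ℤ) (D : Fin n → ℕ)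
    (hU : IsUnit U.det) (hV : IsUnit V.det)
    (hSNF : U * Amat n * V = Matrix.diagonal fun j => (D j : ℤ))
    (hdvd : ∀ i j : Fin n, i ≤ j → D i ∣ D j) :
    (Finset.univ.filter fun j => D j = 1).card = n - n / n.minFac := by
  classical
  have hn0 : 0 < n := by omega
  set p₁ := n.minFac with hp₁def
  have hp₁ : p₁.Prime := Nat.minFac_prime (by omega)
  have hp₁n : p₁ ∣ n := Nat.minFac_dvd n
  -- card of S_q for q prime
  have hcardS : ∀ q : ℕ, q.Prime →
      (Finset.univ.filter fun j => q ∣ D j).card = if q ∣ n then n / q else 0 := by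
    intro q hq
    haveI := Fact.mk hq
    rw [card_dvd_filter n q U V D hU hV hSNF, rank_eq n q hn0 hq]
    by_cases hqn : q ∣ n
    · simp only [if_pos hqn]
      exact Nat.sub_sub_self (Nat.div_le_self n q)
    · simp only [if_neg hqn]
      omega
  have hup : ∀ q : ℕ, ∀ i j : Fin n, i ≤ j →
      i ∈ (Finset.univ.filter fun j => q ∣ D j) → j ∈ (Finset.univ.filter fun j => q ∣ D j) := by
    intro q i j hij hi
    simp only [Finset.mem_filter, Finset.mem_univ, true_and] at hi ⊢
    exact hi.trans (hdvd i j hij)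
  have hup1 : ∀ i j : Fin n, i ≤ j →
      i ∈ (Finset.univ.filter fun j => D j ≠ 1) → j ∈ (Finset.univ.filter fun j => D j ≠ 1) := by
    intro i j hij hi
    simp only [Finset.mem_filter, Finset.mem_univ, true_and] at hi ⊢
    intro hj1
    have := hdvd i j hij
    rw [hj1, Nat.dvd_one] at this
    exact hi this
  -- S_{p₁}
  set S1 := (Finset.univ.filter fun j => p₁ ∣ D j) with hS1def
  set T := (Finset.univ.filter fun j => D j ≠ 1) with hTdef
  have hcardS1 : S1.card = n / p₁ := by
    rw [hS1def, hcardS p₁ hp₁, if_pos hp₁n]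
  have hsub1 : S1 ⊆ T := by
    intro j hj
    simp only [hS1def, hTdef, Finset.mem_filter, Finset.mem_univ, true_and] at hj ⊢
    intro hj1
    rw [hj1, Nat.dvd_one] at hj
    exact hp₁.ne_one hj
  have hsub2 : T ⊆ S1 := by
    intro j hj
    simp only [hTdef, Finset.mem_filter, Finset.mem_univ, true_and] at hj
    rcases Nat.eq_zero_or_pos (D j) with h0 | hpos
    · simp only [hS1def, Finset.mem_filter, Finset.mem_univ, true_and, h0]
      exact dvd_zero _
    · set q := (D j).minFac with hqdef
      have hq : q.Prime := Nat.minFac_prime hj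
      have hqj : q ∣ D j := Nat.minFac_dvd _
      have hjq : j ∈ (Finset.univ.filter fun i => q ∣ D i) := by
        simp only [Finset.mem_filter, Finset.mem_univ, true_and]
        exact hqj
      have hcq : (Finset.univ.filter fun i => q ∣ D i).card ≤ S1.card := by
        rw [hcardS q hq, hcardS1]
        by_cases hqn : q ∣ n
        · simp only [if_pos hqn]
          exact Nat.div_le_div_left (Nat.minFac_le_of_dvd hq.two_le hqn) hp₁.pos
        · simp only [if_neg hqn]
          exact Nat.zero_le _
      exact upclosed_subset (hup q) (hup p₁) hcq hjq
  have hTeq : T = S1 := Finset.Subset.antisymm hsub2 hsub1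
  have hcardT : T.card = n / p₁ := by rw [hTeq, hcardS1]
  have hsplit := Finset.card_filter_add_card_filter_not
    (s := (Finset.univ : Finset (Fin n))) (p := fun j => D j = 1)
  simp only [Finset.card_univ, Fintype.card_fin] at hsplit
  have hTcard' : (Finset.univ.filter fun j => ¬ D j = 1).card = n / p₁ := by
    rw [← hcardT, hTdef]
  have hd1 : n / p₁ ≤ n := Nat.div_le_self _ _
  omega
end
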